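/- arXiv:1203.3149 — 7 statements merged into one kernel-verified Lean document; each statement's English description precedes it below -/
import Mathlib

section
/- Let s ∈ ℝ and let n be a positive integer. Let u : (0,∞) → ℝ be twice continuously differentiable. Then the following are equivalent: (i) u(r) − u(rτ) + (u(r) − u(r/τ)) τ^{2s−n} ≤ 0 for all r > 0 and all τ ≥ 1; (ii) u''(r) + (n − 2s + 1) u'(r)/r ≥ 0 for all r > 0. -/
open Real

lemma comp_forward (lam : ℝ) (G G1 G2 : ℝ → ℝ)
    (h1 : ∀ t, HasDerivAt G (G1 t) t) (h2 : ∀ t, HasDerivAt G1 (G2 t) t)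
    (hG0 : G 0 = 0) (hG10 : G1 0 = 0)
    (hineq : ∀ t ≥ (0:ℝ), lam ^ 2 * G t ≤ G2 t) :
    ∀ t ≥ (0:ℝ), 0 ≤ G t := by
  set E : ℝ → ℝ := fun t => exp (lam * t) + exp (-(lam * t)) with hE
  set O : ℝ → ℝ := fun t => exp (lam * t) - exp (-(lam * t)) with hO
  have hEpos : ∀ t, 0 < E t := fun t => by positivity
  have hexp1 : ∀ t : ℝ, HasDerivAt (fun t => exp (lam * t)) (lam * exp (lam * t)) t := by
    intro t
    have h := ((hasDerivAt_id t).const_mul lam).exp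
    simpa [mul_comm] using h
  have hexp2 : ∀ t : ℝ, HasDerivAt (fun t => exp (-(lam * t))) (-lam * exp (-(lam * t))) t := by
    intro t
    have h := (((hasDerivAt_id t).const_mul lam).neg).exp
    simpa [mul_comm] using h
  have hEd : ∀ t, HasDerivAt E (lam * O t) t := by
    intro t
    have h := (hexp1 t).add (hexp2 t)
    refine h.congr_deriv ?_
    simp [hO]; ring
  have hOd : ∀ t, HasDerivAt O (lam * E t) t := by
    intro t
    have h := (hexp1 t).sub (hexp2 t)
    refine h.congr_deriv ?_
    simp [hE]; ring
  set Q : ℝ → ℝ := fun t => G1 t * E t - lam * (G t * O t) with hQ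
  have hQd : ∀ t, HasDerivAt Q (E t * (G2 t - lam ^ 2 * G t)) t := by
    intro t
    have h := ((h2 t).mul (hEd t)).sub (((h1 t).mul (hOd t)).const_mul lam)
    refine h.congr_deriv ?_
    ring
  have hQ0 : Q 0 = 0 := by simp [hQ, hG10, hG0]
  have hQc : Continuous Q := continuous_iff_continuousAt.mpr fun t => (hQd t).continuousAt
  have hQmono : MonotoneOn Q (Set.Ici 0) := by
    apply monotoneOn_of_deriv_nonneg (convex_Ici 0) hQc.continuousOn
    · exact fun x _ => (hQd x).differentiableAt.differentiableWithinAt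
    · intro x hx
      rw [interior_Ici] at hx
      rw [(hQd x).deriv]
      exact mul_nonneg (hEpos x).le (sub_nonneg.mpr (hineq x (le_of_lt hx)))
  have hQnn : ∀ t ≥ (0:ℝ), 0 ≤ Q t := by
    intro t ht
    have := hQmono (Set.self_mem_Ici) (Set.mem_Ici.mpr ht) ht
    linarith [hQ0]
  set R : ℝ → ℝ := fun t => G t / E t with hR
  have hRd : ∀ t, HasDerivAt R ((G1 t * E t - G t * (lam * O t)) / (E t) ^ 2) t := by
    intro t
    exact (h1 t).div (hEd t) (hEpos t).ne'
  have hRc : Continuous R := continuous_iff_continuousAt.mpr fun t => (hRd t).continuousAt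
  have hRmono : MonotoneOn R (Set.Ici 0) := by
    apply monotoneOn_of_deriv_nonneg (convex_Ici 0) hRc.continuousOn
    · exact fun x _ => (hRd x).differentiableAt.differentiableWithinAt
    · intro x hx
      rw [interior_Ici] at hx
      rw [(hRd x).deriv]
      apply div_nonneg _ (sq_nonneg _)
      have h3 : 0 ≤ G1 x * E x - lam * (G x * O x) := hQnn x (le_of_lt hx)
      linarith
  intro t ht
  have hR0 : R 0 = 0 := by simp [hR, hG0]
  have := hRmono (Set.self_mem_Ici) (Set.mem_Ici.mpr ht) ht
  rw [hR0] at this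
  have hGt : G t = R t * E t := by
    rw [hR]; field_simp [(hEpos t).ne']
  rw [hGt]
  exact mul_nonneg this (hEpos t).le

lemma comp_backward (G G1 G2 : ℝ → ℝ)
    (h1 : ∀ t, HasDerivAt G (G1 t) t) (h2 : ∀ t, HasDerivAt G1 (G2 t) t)
    (hc : ContinuousAt G2 0)
    (hG0 : G 0 = 0) (hG10 : G1 0 = 0)
    (hpos : ∀ t ≥ (0:ℝ), 0 ≤ G t) : 0 ≤ G2 0 := by
  by_contra h
  push_neg at h
  have hmem : G2 ⁻¹' (Set.Iio 0) ∈ nhds (0:ℝ) := hc (Iio_mem_nhds h)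
  obtain ⟨ε, hε, hball⟩ := Metric.mem_nhds_iff.mp hmem
  set d : ℝ := ε / 2 with hd
  have hd0 : 0 < d := by positivity
  have hG2neg : ∀ x ∈ Set.Ioo (0:ℝ) d, G2 x < 0 := by
    intro x hx
    apply hball
    rw [Metric.mem_ball, Real.dist_eq, sub_zero, abs_of_pos hx.1]
    linarith [hx.2]
  have hG1anti : StrictAntiOn G1 (Set.Icc 0 d) := by
    apply strictAntiOn_of_deriv_neg (convex_Icc 0 d)
    · exact Continuous.continuousOn (continuous_iff_continuousAt.mpr fun t => (h2 t).continuousAt)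
    · intro x hx
      rw [interior_Icc] at hx
      rw [(h2 x).deriv]
      exact hG2neg x hx
  have hG1neg : ∀ x ∈ Set.Ioo (0:ℝ) d, G1 x < 0 := by
    intro x hx
    have := hG1anti (Set.mem_Icc.mpr ⟨le_refl 0, hd0.le⟩) (Set.mem_Icc.mpr ⟨hx.1.le, hx.2.le⟩) hx.1
    rw [hG10] at this
    exact this
  have hGanti : StrictAntiOn G (Set.Icc 0 d) := by
    apply strictAntiOn_of_deriv_neg (convex_Icc 0 d)
    · exact Continuous.continuousOn (continuous_iff_continuousAt.mpr fun t => (h1 t).continuousAt)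
    · intro x hx
      rw [interior_Icc] at hx
      rw [(h1 x).deriv]
      exact hG1neg x hx
  have := hGanti (Set.mem_Icc.mpr ⟨le_refl 0, hd0.le⟩) (Set.mem_Icc.mpr ⟨hd0.le, le_refl d⟩) hd0
  rw [hG0] at this
  linarith [hpos d hd0.le]


/-- For a radial `C²` function `u` on `(0,∞)` and any real `s`, the pointwise inequality
`u(r) - u(rτ) + (u(r) - u(r/τ))τ^{2s-n} ≤ 0` (for all `r > 0`, `τ ≥ 1`) is equivalent to
the differential inequality `u''(r) + (n - 2s + 1) u'(r)/r ≥ 0` (for all `r > 0`). -/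
theorem stmt_2 (s : ℝ) (n : ℕ) (hn : 0 < n)
    (u u' u'' : ℝ → ℝ)
    (hu' : ∀ r > (0:ℝ), HasDerivAt u (u' r) r)
    (hu'' : ∀ r > (0:ℝ), HasDerivAt u' (u'' r) r)
    (hcont : ContinuousOn u'' (Set.Ioi 0)) :
    (∀ r > (0:ℝ), ∀ τ ≥ (1:ℝ),
        u r - u (r * τ) + (u r - u (r / τ)) * τ ^ (2 * s - (n : ℝ)) ≤ 0) ↔
    (∀ r > (0:ℝ), 0 ≤ u'' r + ((n : ℝ) - 2 * s + 1) * u' r / r) := by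
  set lam : ℝ := ((n:ℝ) - 2*s)/2 with hlam
  set w : ℝ → ℝ := fun x => exp (lam*x) * u (exp x) with hwdef
  set w1 : ℝ → ℝ := fun x => exp (lam*x) * (lam * u (exp x) + exp x * u' (exp x)) with hw1def
  set w2 : ℝ → ℝ := fun x => exp (lam*x) * (lam^2 * u (exp x) + (2*lam+1) * (exp x * u' (exp x))
      + (exp x)^2 * u'' (exp x)) with hw2def
  have hexp1 : ∀ t : ℝ, HasDerivAt (fun t => exp (lam * t)) (lam * exp (lam * t)) t := by
    intro t
    have h := ((hasDerivAt_id t).const_mul lam).exp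
    simpa [mul_comm] using h
  have hexp2 : ∀ t : ℝ, HasDerivAt (fun t => exp (-(lam * t))) (-lam * exp (-(lam * t))) t := by
    intro t
    have h := (((hasDerivAt_id t).const_mul lam).neg).exp
    simpa [mul_comm] using h
  have hue : ∀ x : ℝ, HasDerivAt (fun x => u (exp x)) (u' (exp x) * exp x) x :=
    fun x => (hu' _ (exp_pos x)).comp x (Real.hasDerivAt_exp x)
  have hu'e : ∀ x : ℝ, HasDerivAt (fun x => u' (exp x)) (u'' (exp x) * exp x) x :=
    fun x => (hu'' _ (exp_pos x)).comp x (Real.hasDerivAt_exp x)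
  have hwd : ∀ x, HasDerivAt w (w1 x) x := by
    intro x
    have h := (hexp1 x).mul (hue x)
    refine h.congr_deriv ?_
    simp only [hw1def]; ring
  have hw1d : ∀ x, HasDerivAt w1 (w2 x) x := by
    intro x
    have hinner : HasDerivAt (fun x => lam * u (exp x) + exp x * u' (exp x))
        (lam * (u' (exp x) * exp x) + (exp x * u' (exp x) + exp x * (u'' (exp x) * exp x))) x :=
      ((hue x).const_mul lam).add ((Real.hasDerivAt_exp x).mul (hu'e x))
    have h := (hexp1 x).mul hinner
    refine h.congr_deriv ?_
    simp only [hw2def]; ring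
  -- continuity of w2
  have hcu : Continuous fun x : ℝ => u (exp x) := continuous_iff_continuousAt.mpr fun x =>
    ((hu' _ (exp_pos x)).continuousAt).comp Real.continuous_exp.continuousAt
  have hcu' : Continuous fun x : ℝ => u' (exp x) := continuous_iff_continuousAt.mpr fun x =>
    ((hu'' _ (exp_pos x)).continuousAt).comp Real.continuous_exp.continuousAt
  have hcu'' : Continuous fun x : ℝ => u'' (exp x) :=
    hcont.comp_continuous Real.continuous_exp (fun x => Set.mem_Ioi.mpr (exp_pos x))
  have hexplamc : Continuous fun x : ℝ => exp (lam * x) :=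
    Real.continuous_exp.comp (continuous_const.mul continuous_id)
  have hw2c : Continuous w2 := by
    rw [hw2def]
    exact hexplamc.mul ((((continuous_const.mul hcu)).add
      (continuous_const.mul (Real.continuous_exp.mul hcu'))).add
      ((Real.continuous_exp.pow 2).mul hcu''))
  -- key pointwise identity
  have hKsum : 2*lam + 1 = (n:ℝ) - 2*s + 1 := by rw [hlam]; ring
  have hkey : ∀ x : ℝ, w2 x - lam^2 * w x
      = exp (lam*x) * ((2*lam+1) * (exp x * u' (exp x)) + (exp x)^2 * u'' (exp x)) := by
    intro x; simp only [hwdef, hw2def]; ring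
  -- the G functions
  set G : ℝ → ℝ → ℝ := fun m t => w (m+t) + w (m-t) - (exp (lam*t) + exp (-(lam*t))) * w m
    with hGdef
  set G1 : ℝ → ℝ → ℝ := fun m t => w1 (m+t) - w1 (m-t) - lam * (exp (lam*t) - exp (-(lam*t))) * w m
    with hG1def
  set G2 : ℝ → ℝ → ℝ := fun m t => w2 (m+t) + w2 (m-t)
      - lam^2 * (exp (lam*t) + exp (-(lam*t))) * w m with hG2def
  have hGd : ∀ m t, HasDerivAt (G m) (G1 m t) t := by
    intro m t
    have p1 : HasDerivAt (fun t : ℝ => w (m + t)) (w1 (m + t)) t := by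
      have h := HasDerivAt.comp t (hwd (m + t)) ((hasDerivAt_id t).const_add m)
      simpa [Function.comp_def] using h
    have p2 : HasDerivAt (fun t : ℝ => w (m - t)) (-w1 (m - t)) t := by
      have h := HasDerivAt.comp t (hwd (m - t)) ((hasDerivAt_id t).const_sub m)
      simpa [Function.comp_def] using h
    have h := (p1.add p2).sub (((hexp1 t).add (hexp2 t)).mul_const (w m))
    refine h.congr_deriv ?_
    simp only [hG1def]; ring
  have hG1d : ∀ m t, HasDerivAt (G1 m) (G2 m t) t := by
    intro m t
    have p1 : HasDerivAt (fun t : ℝ => w1 (m + t)) (w2 (m + t)) t := by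
      have h := HasDerivAt.comp t (hw1d (m + t)) ((hasDerivAt_id t).const_add m)
      simpa [Function.comp_def] using h
    have p2 : HasDerivAt (fun t : ℝ => w1 (m - t)) (-w2 (m - t)) t := by
      have h := HasDerivAt.comp t (hw1d (m - t)) ((hasDerivAt_id t).const_sub m)
      simpa [Function.comp_def] using h
    have h := (p1.sub p2).sub ((((hexp1 t).sub (hexp2 t)).const_mul lam).mul_const (w m))
    refine h.congr_deriv ?_
    simp only [hG2def]; ring
  have hG0 : ∀ m, G m 0 = 0 := by
    intro m; simp only [hGdef]; norm_num; ring
  have hG10 : ∀ m, G1 m 0 = 0 := by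
    intro m; simp only [hG1def]; norm_num
  have hG2c : ∀ m, ContinuousAt (G2 m) 0 := by
    intro m
    have : Continuous (G2 m) := by
      rw [hG2def]
      exact ((hw2c.comp (continuous_const.add continuous_id)).add
        (hw2c.comp (continuous_const.sub continuous_id))).sub
        ((continuous_const.mul (hexplamc.add
          (Real.continuous_exp.comp (continuous_const.mul continuous_id).neg))).mul continuous_const)
    exact this.continuousAt
  have hG2_0 : ∀ m, G2 m 0 = 2 * (w2 m - lam^2 * w m) := by
    intro m; simp only [hG2def]; norm_num; ring
  -- bridge identity
  have hbridge : ∀ r : ℝ, 0 < r → ∀ t : ℝ, G (log r) t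
      = exp (lam*((log r)+t)) *
        (-(u r - u (r * exp t) + (u r - u (r / exp t)) * (exp t) ^ (2 * s - (n:ℝ)))) := by
    intro r hr t
    have hrm : exp (log r) = r := exp_log hr
    have h1 : r * exp t = exp (log r + t) := by rw [exp_add, hrm]
    have h2 : r / exp t = exp (log r - t) := by rw [exp_sub, hrm]
    have h3 : (exp t) ^ (2*s-(n:ℝ)) = exp (-(lam*t)) * exp (-(lam*t)) := by
      rw [← exp_add, Real.rpow_def_of_pos (exp_pos t), Real.log_exp]
      congr 1
      rw [hlam]; ring
    simp only [hGdef, hwdef]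
    rw [h1, h2, h3, show u r = u (exp (log r)) from by rw [hrm]]
    rw [show lam*(log r + t) = lam*(log r) + lam*t by ring,
        show lam*(log r - t) = lam*(log r) - lam*t by ring,
        exp_add, exp_sub, exp_neg]
    have hY : exp (lam*t) ≠ 0 := (exp_pos _).ne'
    field_simp
    ring
  constructor
  · -- (i) → (ii)
    intro H r hr
    have hGpos : ∀ t ≥ (0:ℝ), 0 ≤ G (log r) t := by
      intro t ht
      rw [hbridge r hr t]
      have hF := H r hr (exp t) (Real.one_le_exp ht)
      have h2 := neg_nonneg.mpr hF
      exact mul_nonneg (exp_pos _).le h2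
    have h0 := comp_backward (G (log r)) (G1 (log r)) (G2 (log r)) (hGd _) (hG1d _)
      (hG2c _) (hG0 _) (hG10 _) hGpos
    rw [hG2_0] at h0
    have h1 : (0:ℝ) ≤ w2 (log r) - lam^2 * w (log r) := by linarith
    rw [hkey] at h1
    rw [exp_log hr] at h1
    have h2 : (0:ℝ) ≤ (2*lam+1) * (r * u' r) + r^2 * u'' r := by
      refine le_of_mul_le_mul_left ?_ (exp_pos (lam * log r))
      rw [mul_zero]; exact h1
    have hrne : r ≠ 0 := ne_of_gt hr
    have heq : u'' r + ((n:ℝ) - 2*s + 1) * u' r / r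
        = ((2*lam+1) * (r * u' r) + r^2 * u'' r) / r^2 := by
      rw [hKsum]; field_simp; ring
    rw [heq]
    exact div_nonneg h2 (sq_nonneg r)
  · -- (ii) → (i)
    intro H r hr τ hτ
    have hτ0 : (0:ℝ) < τ := lt_of_lt_of_le one_pos hτ
    have hkeynn : ∀ x : ℝ, 0 ≤ w2 x - lam^2 * w x := by
      intro x
      rw [hkey x]
      apply mul_nonneg (exp_pos _).le
      have hH := H (exp x) (exp_pos x)
      have heq : (2*lam+1) * (exp x * u' (exp x)) + (exp x)^2 * u'' (exp x)
          = (exp x)^2 * (u'' (exp x) + ((n:ℝ) - 2*s + 1) * u' (exp x) / exp x) := by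
        rw [hKsum]
        have : exp x ≠ 0 := (exp_pos x).ne'
        field_simp; ring
      rw [heq]
      exact mul_nonneg (sq_nonneg _) hH
    have hineq : ∀ t ≥ (0:ℝ), lam^2 * G (log r) t ≤ G2 (log r) t := by
      intro t _
      have e1 := hkeynn (log r + t)
      have e2 := hkeynn (log r - t)
      simp only [hGdef, hG2def]
      nlinarith [e1, e2, sq_nonneg lam]
    have hGpos := comp_forward lam (G (log r)) (G1 (log r)) (G2 (log r)) (hGd _) (hG1d _)
      (hG0 _) (hG10 _) hineq
    have h := hGpos (log τ) (log_nonneg hτ)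
    rw [hbridge r hr (log τ), exp_log hτ0] at h
    have h2 : (0:ℝ) ≤ -(u r - u (r * τ) + (u r - u (r / τ)) * τ ^ (2*s-(n:ℝ))) := by
      refine le_of_mul_le_mul_left ?_ (exp_pos (lam * (log r + log τ)))
      rw [mul_zero]; exact h
    linarith
end

section
/- Let s ∈ ℝ, let n be a positive integer, let β > 0, and set f_β(r) = −(1+r²)^{−β/2} for r > 0. Then the condition: f_β(r) − f_β(rτ) + (f_β(r) − f_β(r/τ)) τ^{2s−n} ≤ 0 for all r > 0 and all τ ≥ 1, holds if and only if β ≤ n − 2s. Equivalently, f_β''(r) + (n − 2s + 1) f_β'(r)/r ≥ 0 for all r > 0 if and only if β ≤ n − 2s. -/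
/-- `f_β(r) = -(1+r²)^{-β/2}`. -/
noncomputable def fbeta (β r : ℝ) : ℝ := -((1 + r ^ 2) ^ (-(β / 2)))

open Real Filter

lemma one_add_sq_pos (r : ℝ) : 0 < 1 + r ^ 2 := by positivity

lemma rpow_neg_anti {x y t : ℝ} (hx : 0 < x) (hxy : x ≤ y) (ht : 0 ≤ t) :
    y ^ (-t) ≤ x ^ (-t) := by
  rw [Real.rpow_neg hx.le, Real.rpow_neg (hx.trans_le hxy).le]
  exact inv_anti₀ (Real.rpow_pos_of_pos hx t) (Real.rpow_le_rpow hx.le hxy ht)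

lemma hasDerivAt_shift_rpow {t c x : ℝ} (hxc : x + c ≠ 0) :
    HasDerivAt (fun x : ℝ => (x + c) ^ (-t)) (-t * (x + c) ^ (-t - 1)) x := by
  have := ((hasDerivAt_id x).add_const c).rpow_const (p := -t) (Or.inl hxc)
  simpa using this

lemma key_aux {t a c w : ℝ} (ht : 0 < t) (ha : 0 < a) (hc : 0 ≤ c) (haw : a ≤ w) :
    w ^ (-t) - (w + c) ^ (-t) ≤ a ^ (-t) - (a + c) ^ (-t) := by
  have hanti : AntitoneOn (fun x : ℝ => x ^ (-t) - (x + c) ^ (-t)) (Set.Ici a) := by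
    have hd : ∀ x ∈ Set.Ici a, HasDerivAt (fun x : ℝ => x ^ (-t) - (x + c) ^ (-t))
        (-t * x ^ (-t - 1) - -t * (x + c) ^ (-t - 1)) x := by
      intro x hx
      have hx0 : 0 < x := lt_of_lt_of_le ha hx
      have hxc : 0 < x + c := by linarith
      exact (Real.hasDerivAt_rpow_const (Or.inl hx0.ne')).sub (hasDerivAt_shift_rpow hxc.ne')
    apply antitoneOn_of_deriv_nonpos (convex_Ici a)
    · exact fun x hx => (hd x hx).continuousAt.continuousWithinAt
    · intro x hx
      rw [interior_Ici] at hx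
      exact (hd x (Set.mem_Ici.mpr (Set.mem_Ioi.mp hx).le)).differentiableAt.differentiableWithinAt
    · intro x hx
      rw [interior_Ici] at hx
      have hx0 : 0 < x := lt_of_le_of_lt ha.le hx
      rw [(hd x (Set.mem_Ici.mpr (Set.mem_Ioi.mp hx).le)).deriv]
      have h := rpow_neg_anti hx0 (by linarith : x ≤ x + c) (by linarith : (0:ℝ) ≤ t + 1)
      have h' : (x + c) ^ (-t - 1) ≤ x ^ (-t - 1) := by
        rw [show -t - 1 = -(t + 1) by ring]; exact h
      nlinarith
  have := hanti (Set.self_mem_Ici) (Set.mem_Ici.mpr haw) haw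
  simpa using this

lemma part1_back {β γ : ℝ} (hβ : 0 < β) (hβγ : β ≤ γ) {r τ : ℝ} (hr : 0 < r) (hτ : 1 ≤ τ) :
    fbeta β r - fbeta β (r * τ) + (fbeta β r - fbeta β (r / τ)) * τ ^ (-γ) ≤ 0 := by
  have hτ0 : (0:ℝ) < τ := by linarith
  have hτ2 : (1:ℝ) ≤ τ ^ 2 := by nlinarith
  set a : ℝ := 1 + r ^ 2 with hadef
  set c : ℝ := r ^ 2 * (τ ^ 2 - 1) with hcdef
  set w : ℝ := τ ^ 2 + r ^ 2 with hwdef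
  have ha : 0 < a := by positivity
  have hc : 0 ≤ c := by nlinarith
  have haw : a ≤ w := by simp only [hadef, hwdef]; nlinarith
  have hw : 0 < w := by positivity
  have hwτ : 0 < w / τ ^ 2 := by positivity
  have e1 : fbeta β (r * τ) = -((a + c) ^ (-(β / 2))) := by
    simp only [fbeta]; congr 2; ring
  have e2 : fbeta β (r / τ) = -((w / τ ^ 2) ^ (-(β / 2))) := by
    simp only [fbeta]; congr 2; field_simp; rw [hwdef]
  have hτβ : (τ ^ 2 : ℝ) ^ (-(β / 2)) = τ ^ (-β) := by
    rw [← Real.rpow_natCast τ 2, ← Real.rpow_mul hτ0.le]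
    congr 1; push_cast; ring
  have h1 : (w / τ ^ 2) ^ (-(β / 2)) * τ ^ (-β) = w ^ (-(β / 2)) := by
    rw [← hτβ, ← Real.mul_rpow hwτ.le (by positivity)]
    congr 1
    field_simp
  have h2 : a ^ (-(β / 2)) * τ ^ (-β) = (w + c) ^ (-(β / 2)) := by
    rw [← hτβ, ← Real.mul_rpow ha.le (by positivity)]
    congr 1
    simp only [hadef, hwdef, hcdef]; ring
  have h3 : a ^ (-(β / 2)) ≤ (w / τ ^ 2) ^ (-(β / 2)) := by
    apply rpow_neg_anti hwτ _ (by linarith)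
    rw [div_le_iff₀ (by positivity)]
    simp only [hadef, hwdef]; nlinarith
  have h4 : τ ^ (-γ) ≤ τ ^ (-β) := Real.rpow_le_rpow_of_exponent_le hτ (by linarith)
  have h5 := key_aux (by linarith : 0 < β / 2) ha hc haw
  have h6 : (0:ℝ) ≤ τ ^ (-γ) := Real.rpow_nonneg hτ0.le _
  rw [e1, e2]
  simp only [fbeta]
  have h7 : ((w / τ ^ 2) ^ (-(β / 2)) - a ^ (-(β / 2))) * τ ^ (-γ)
      ≤ ((w / τ ^ 2) ^ (-(β / 2)) - a ^ (-(β / 2))) * τ ^ (-β) :=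
    mul_le_mul_of_nonneg_left h4 (by linarith)
  have h8 : ((w / τ ^ 2) ^ (-(β / 2)) - a ^ (-(β / 2))) * τ ^ (-β)
      = w ^ (-(β / 2)) - (w + c) ^ (-(β / 2)) := by
    rw [sub_mul, h1, h2]
  have h9 : -(a ^ (-(β / 2))) - -((a + c) ^ (-(β / 2)))
      + (-(a ^ (-(β / 2))) - -((w / τ ^ 2) ^ (-(β / 2)))) * τ ^ (-γ)
      = ((a + c) ^ (-(β / 2)) - a ^ (-(β / 2)))
        + ((w / τ ^ 2) ^ (-(β / 2)) - a ^ (-(β / 2))) * τ ^ (-γ) := by ring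
  rw [h9]
  linarith

lemma part1_fwd {β γ : ℝ} (hβ : 0 < β)
    (H : ∀ r > (0:ℝ), fbeta β r - fbeta β (r * 2)
      + (fbeta β r - fbeta β (r / 2)) * (2:ℝ) ^ (-γ) ≤ 0) :
    β ≤ γ := by
  by_contra hcon
  push_neg at hcon
  set G : ℝ → ℝ := fun r => (fbeta β r - fbeta β (r * 2)
      + (fbeta β r - fbeta β (r / 2)) * (2:ℝ) ^ (-γ)) * (1 + r ^ 2) ^ (β / 2) with hGdef
  have hG : ∀ r ≥ (1:ℝ), G r ≤ 0 := fun r hr =>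
    mul_nonpos_of_nonpos_of_nonneg (H r (by linarith))
      (Real.rpow_nonneg (one_add_sq_pos r).le _)
  have hk : ∀ r x : ℝ, 0 < x → (x / (1 + r ^ 2)) ^ (-(β / 2))
      = x ^ (-(β / 2)) * (1 + r ^ 2) ^ (β / 2) := by
    intro r x hx
    rw [Real.div_rpow hx.le (one_add_sq_pos r).le, Real.rpow_neg (one_add_sq_pos r).le,
      div_eq_mul_inv, inv_inv]
  have hGeq : ∀ r : ℝ, G r = -1 + ((1 + 4 * r ^ 2) / (1 + r ^ 2)) ^ (-(β / 2))
      + (-1 + ((1 + r ^ 2 / 4) / (1 + r ^ 2)) ^ (-(β / 2))) * (2:ℝ) ^ (-γ) := by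
    intro r
    have hA0 : fbeta β r * (1 + r ^ 2) ^ (β / 2) = -1 := by
      simp only [fbeta]
      rw [neg_mul, ← Real.rpow_add (one_add_sq_pos r)]
      norm_num
    have hA1 : fbeta β (r * 2) * (1 + r ^ 2) ^ (β / 2)
        = -(((1 + 4 * r ^ 2) / (1 + r ^ 2)) ^ (-(β / 2))) := by
      simp only [fbeta]
      rw [hk r (1 + 4 * r ^ 2) (by positivity)]
      rw [show 1 + (r * 2) ^ 2 = 1 + 4 * r ^ 2 by ring]
      ring
    have hA2 : fbeta β (r / 2) * (1 + r ^ 2) ^ (β / 2)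
        = -(((1 + r ^ 2 / 4) / (1 + r ^ 2)) ^ (-(β / 2))) := by
      simp only [fbeta]
      rw [hk r (1 + r ^ 2 / 4) (by positivity)]
      rw [show 1 + (r / 2) ^ 2 = 1 + r ^ 2 / 4 by ring]
      ring
    have expand : G r = (fbeta β r * (1 + r ^ 2) ^ (β / 2))
        - (fbeta β (r * 2) * (1 + r ^ 2) ^ (β / 2))
        + ((fbeta β r * (1 + r ^ 2) ^ (β / 2))
          - (fbeta β (r / 2) * (1 + r ^ 2) ^ (β / 2))) * (2:ℝ) ^ (-γ) := by
      simp only [hGdef]; ring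
    rw [expand, hA0, hA1, hA2]
    ring
  have hT : Tendsto (fun r : ℝ => 1 + r ^ 2) atTop atTop :=
    tendsto_atTop_add_const_left _ 1 (tendsto_pow_atTop two_ne_zero)
  have L1 : Tendsto (fun r : ℝ => (1 + 4 * r ^ 2) / (1 + r ^ 2)) atTop (nhds 4) := by
    have hz : Tendsto (fun r : ℝ => 3 / (1 + r ^ 2)) atTop (nhds 0) :=
      Tendsto.div_atTop tendsto_const_nhds hT
    have h4 : Tendsto (fun r : ℝ => 4 - 3 / (1 + r ^ 2)) atTop (nhds 4) := by
      simpa using tendsto_const_nhds.sub hz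
    refine h4.congr fun r => ?_
    have := (one_add_sq_pos r).ne'
    field_simp
    ring
  have L2 : Tendsto (fun r : ℝ => (1 + r ^ 2 / 4) / (1 + r ^ 2)) atTop (nhds (1/4)) := by
    have hz : Tendsto (fun r : ℝ => (3/4) / (1 + r ^ 2)) atTop (nhds 0) :=
      Tendsto.div_atTop tendsto_const_nhds hT
    have h4 : Tendsto (fun r : ℝ => 1/4 + (3/4) / (1 + r ^ 2)) atTop (nhds (1/4)) := by
      simpa using tendsto_const_nhds.add hz
    refine h4.congr fun r => ?_
    have := (one_add_sq_pos r).ne'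
    field_simp
    ring
  have R1 : Tendsto (fun r : ℝ => ((1 + 4 * r ^ 2) / (1 + r ^ 2)) ^ (-(β / 2))) atTop
      (nhds ((4:ℝ) ^ (-(β / 2)))) := L1.rpow_const (Or.inl (by norm_num))
  have R2 : Tendsto (fun r : ℝ => ((1 + r ^ 2 / 4) / (1 + r ^ 2)) ^ (-(β / 2))) atTop
      (nhds (((1:ℝ)/4) ^ (-(β / 2)))) := L2.rpow_const (Or.inl (by norm_num))
  have h14 : ((1:ℝ)/4) ^ (-(β / 2)) = (4:ℝ) ^ (β / 2) := by
    rw [one_div, Real.inv_rpow (by norm_num : (0:ℝ) ≤ 4),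
      Real.rpow_neg (by norm_num : (0:ℝ) ≤ 4), inv_inv]
  have hlim : Tendsto G atTop (nhds (-1 + (4:ℝ) ^ (-(β / 2))
      + (-1 + (4:ℝ) ^ (β / 2)) * (2:ℝ) ^ (-γ))) := by
    have h0 : Tendsto (fun r : ℝ => -1 + ((1 + 4 * r ^ 2) / (1 + r ^ 2)) ^ (-(β / 2))
        + (-1 + ((1 + r ^ 2 / 4) / (1 + r ^ 2)) ^ (-(β / 2))) * (2:ℝ) ^ (-γ)) atTop
        (nhds (-1 + (4:ℝ) ^ (-(β / 2)) + (-1 + ((1:ℝ)/4) ^ (-(β / 2))) * (2:ℝ) ^ (-γ))) :=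
      (tendsto_const_nhds.add R1).add ((tendsto_const_nhds.add R2).mul_const ((2:ℝ) ^ (-γ)))
    rw [h14] at h0
    exact h0.congr fun r => (hGeq r).symm
  have hL : -1 + (4:ℝ) ^ (-(β / 2)) + (-1 + (4:ℝ) ^ (β / 2)) * (2:ℝ) ^ (-γ) ≤ 0 :=
    le_of_tendsto hlim ((eventually_ge_atTop 1).mono fun r hr => hG r hr)
  have h4A : (4:ℝ) ^ (-(β / 2)) = (2:ℝ) ^ (-β) := by
    rw [show (4:ℝ) = 2 ^ (2:ℕ) by norm_num, ← Real.rpow_natCast 2 2,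
      ← Real.rpow_mul (by norm_num : (0:ℝ) ≤ 2)]
    congr 1; push_cast; ring
  have h4B : (4:ℝ) ^ (β / 2) = (2:ℝ) ^ β := by
    rw [show (4:ℝ) = 2 ^ (2:ℕ) by norm_num, ← Real.rpow_natCast 2 2,
      ← Real.rpow_mul (by norm_num : (0:ℝ) ≤ 2)]
    congr 1; push_cast; ring
  rw [h4A, h4B] at hL
  have hAB : (2:ℝ) ^ (-β) * (2:ℝ) ^ β = 1 := by
    rw [← Real.rpow_add two_pos]; norm_num
  have hB1 : (1:ℝ) < (2:ℝ) ^ β := by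
    simpa using Real.rpow_lt_rpow_of_exponent_lt one_lt_two hβ
  have hCA : (2:ℝ) ^ (-β) < (2:ℝ) ^ (-γ) :=
    Real.rpow_lt_rpow_of_exponent_lt one_lt_two (by linarith)
  nlinarith [mul_pos (sub_pos.2 hB1) (sub_pos.2 hCA)]

lemma base_hasDerivAt (p r : ℝ) :
    HasDerivAt (fun x : ℝ => (1 + x ^ 2) ^ p) (p * (1 + r ^ 2) ^ (p - 1) * (2 * r)) r := by
  have h1 : HasDerivAt (fun x : ℝ => 1 + x ^ 2) (2 * r) r := by
    simpa using (hasDerivAt_pow 2 r).const_add 1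
  have := h1.rpow_const (p := p) (Or.inl (one_add_sq_pos r).ne')
  convert this using 1
  ring

lemma hasDerivAt_fbeta (β r : ℝ) :
    HasDerivAt (fbeta β) (β * r * (1 + r ^ 2) ^ (-(β / 2) - 1)) r := by
  have := (base_hasDerivAt (-(β / 2)) r).neg
  exact this.congr_deriv (by ring)

lemma deriv_fbeta (β : ℝ) :
    deriv (fbeta β) = fun r => β * r * (1 + r ^ 2) ^ (-(β / 2) - 1) :=
  funext fun r => (hasDerivAt_fbeta β r).deriv

lemma hasDerivAt_deriv_fbeta (β r : ℝ) :
    HasDerivAt (deriv (fbeta β))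
      (β * (1 + r ^ 2) ^ (-(β / 2) - 1)
        + (β * r) * ((-(β / 2) - 1) * (1 + r ^ 2) ^ (-(β / 2) - 2) * (2 * r))) r := by
  rw [deriv_fbeta]
  have h1 : HasDerivAt (fun x : ℝ => β * x) β r := by
    simpa using (hasDerivAt_id r).const_mul β
  have h2 := base_hasDerivAt (-(β / 2) - 1) r
  have := h1.mul h2
  exact this.congr_deriv (by rw [show -(β / 2) - 1 - 1 = -(β / 2) - 2 by ring])

lemma expr_eq (β γ : ℝ) {r : ℝ} (hr : r ≠ 0) :
    deriv (deriv (fbeta β)) r + (γ + 1) * deriv (fbeta β) r / r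
      = β * (1 + r ^ 2) ^ (-(β / 2) - 2) * ((γ + 2) + (γ - β) * r ^ 2) := by
  rw [(hasDerivAt_deriv_fbeta β r).deriv, (hasDerivAt_fbeta β r).deriv]
  have key : (1 + r ^ 2) ^ (-(β / 2) - 1) = (1 + r ^ 2) ^ (-(β / 2) - 2) * (1 + r ^ 2) := by
    rw [show -(β / 2) - 1 = (-(β / 2) - 2) + 1 by ring,
      Real.rpow_add_one (one_add_sq_pos r).ne']
  rw [key]
  set X := (1 + r ^ 2) ^ (-(β / 2) - 2) with hX
  field_simp
  ring

lemma part2 (γ β : ℝ) (hβ : 0 < β) :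
    ((∀ r > (0:ℝ),
        0 ≤ deriv (deriv (fbeta β)) r + (γ + 1) * deriv (fbeta β) r / r) ↔ β ≤ γ) := by
  constructor
  · intro H
    by_contra hc
    push_neg at hc
    set r : ℝ := Real.sqrt ((max (γ + 2) 0 + 1) / (β - γ)) with hrdef
    have hq : 0 < (max (γ + 2) 0 + 1) / (β - γ) := by
      apply div_pos _ (by linarith)
      have := le_max_right (γ + 2) 0
      linarith
    have hr : 0 < r := Real.sqrt_pos.mpr hq
    have hr2 : r ^ 2 = (max (γ + 2) 0 + 1) / (β - γ) := Real.sq_sqrt hq.le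
    have h := H r hr
    rw [expr_eq β γ hr.ne'] at h
    have hb : (γ + 2) + (γ - β) * r ^ 2 ≤ -1 := by
      rw [hr2]
      have hne : β - γ ≠ 0 := by linarith
      have : (γ - β) * ((max (γ + 2) 0 + 1) / (β - γ)) = -(max (γ + 2) 0 + 1) := by
        field_simp
        ring
      rw [this]
      have := le_max_left (γ + 2) 0
      linarith
    have hP := Real.rpow_pos_of_pos (one_add_sq_pos r) (-(β / 2) - 2)
    nlinarith [mul_pos hβ hP, mul_le_mul_of_nonneg_left hb (mul_pos hβ hP).le]
  · intro hβγ r hr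
    rw [expr_eq β γ hr.ne']
    have h1 : (0:ℝ) < (1 + r ^ 2) ^ (-(β / 2) - 2) :=
      Real.rpow_pos_of_pos (one_add_sq_pos r) _
    have h2 : 0 ≤ (γ + 2) + (γ - β) * r ^ 2 := by nlinarith [sq_nonneg r]
    positivity

/-- For `f_β(r) = -(1+r²)^{-β/2}` with `β > 0` and any real `s`, the pointwise inequality
`f_β(r) - f_β(rτ) + (f_β(r) - f_β(r/τ))τ^{2s-n} ≤ 0` (for all `r > 0`, `τ ≥ 1`) holds iff
`β ≤ n - 2s`; equivalently `f_β'' + (n-2s+1) f_β'/r ≥ 0` on `(0,∞)` iff `β ≤ n - 2s`. -/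
theorem stmt_4 (s : ℝ) (n : ℕ) (hn : 0 < n) (β : ℝ) (hβ : 0 < β) :
    ((∀ r > (0:ℝ), ∀ τ ≥ (1:ℝ),
        fbeta β r - fbeta β (r * τ) +
          (fbeta β r - fbeta β (r / τ)) * τ ^ (2 * s - (n : ℝ)) ≤ 0) ↔
      β ≤ (n : ℝ) - 2 * s) ∧
    ((∀ r > (0:ℝ),
        0 ≤ deriv (deriv (fbeta β)) r + ((n : ℝ) - 2 * s + 1) * deriv (fbeta β) r / r) ↔
      β ≤ (n : ℝ) - 2 * s) := by
  have hexp : (2 * s - (n : ℝ)) = -((n : ℝ) - 2 * s) := by ring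
  constructor
  · constructor
    · intro H
      apply part1_fwd (γ := (n : ℝ) - 2 * s) hβ
      intro r hr
      have := H r hr 2 one_le_two
      rwa [hexp] at this
    · intro h r hr τ hτ
      rw [hexp]
      exact part1_back hβ h hr hτ
  · exact part2 ((n : ℝ) - 2 * s) β hβ
end

section
/- Let γ ∈ ℝ and let φ : ℝ → ℝ be twice differentiable with φ(0) = 0 and φ''(x) + γ·φ'(x) ≥ 0 for all x ∈ ℝ. Then φ(x)·e^{γx} + φ(−x) ≥ 0 for all x ≥ 0. -/
/-- Key one-variable lemma: if `φ(0) = 0` and `φ'' + γφ' ≥ 0` on `ℝ`, then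
`φ(x)e^{γx} + φ(-x) ≥ 0` for all `x ≥ 0`. -/
theorem stmt_11 (γ : ℝ) (φ φ' φ'' : ℝ → ℝ)
    (hφ' : ∀ x : ℝ, HasDerivAt φ (φ' x) x)
    (hφ'' : ∀ x : ℝ, HasDerivAt φ' (φ'' x) x)
    (h0 : φ 0 = 0)
    (hineq : ∀ x : ℝ, 0 ≤ φ'' x + γ * φ' x) :
    ∀ x ≥ (0:ℝ), 0 ≤ φ x * Real.exp (γ * x) + φ (-x) := by
  set G : ℝ → ℝ := fun x => φ' x + γ * φ x with hGdef
  set h : ℝ → ℝ := fun x => φ' x * Real.exp (γ * x) - G (-x) with hhdef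
  set w : ℝ → ℝ := fun x => φ x + φ (-x) * Real.exp (-(γ * x)) with hwdef
  have he : ∀ x : ℝ, HasDerivAt (fun x => Real.exp (γ * x)) (γ * Real.exp (γ * x)) x := by
    intro x
    simpa [mul_comm] using (((hasDerivAt_id x).const_mul γ).exp)
  have hG : ∀ x, HasDerivAt G (φ'' x + γ * φ' x) x := fun x =>
    (hφ'' x).add ((hφ' x).const_mul γ)
  have hh : ∀ x, HasDerivAt h
      ((φ'' x + γ * φ' x) * Real.exp (γ * x) + (φ'' (-x) + γ * φ' (-x))) x := by
    intro x
    have h1 := (hφ'' x).mul (he x)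
    have h2 : HasDerivAt (fun x => G (-x)) ((φ'' (-x) + γ * φ' (-x)) * (-1)) x :=
      (hG (-x)).comp x (hasDerivAt_neg x)
    refine (h1.sub h2).congr_deriv ?_
    ring
  have hhmono : Monotone h :=
    monotone_of_deriv_nonneg (fun x => (hh x).differentiableAt)
      (fun x => by
        rw [(hh x).deriv]
        exact add_nonneg (mul_nonneg (hineq x) (Real.exp_pos _).le) (hineq (-x)))
  have hh0 : h 0 = 0 := by simp [hhdef, hGdef, h0]
  have hhpos : ∀ x : ℝ, 0 ≤ x → 0 ≤ h x := by
    intro x hx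
    have := hhmono hx
    rwa [hh0] at this
  have hw : ∀ x, HasDerivAt w (φ' x - G (-x) * Real.exp (-(γ * x))) x := by
    intro x
    have hphin : HasDerivAt (fun x => φ (-x)) (φ' (-x) * (-1)) x :=
      (hφ' (-x)).comp x (hasDerivAt_neg x)
    have hexn : HasDerivAt (fun x => Real.exp (-(γ * x))) (-γ * Real.exp (-(γ * x))) x := by
      simpa [mul_comm] using (((hasDerivAt_id x).const_mul γ).neg.exp)
    refine ((hφ' x).add (hphin.mul hexn)).congr_deriv ?_
    simp only [hGdef]
    ring
  have hwderiv : ∀ x : ℝ, 0 ≤ x → 0 ≤ φ' x - G (-x) * Real.exp (-(γ * x)) := by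
    intro x hx
    have key : φ' x - G (-x) * Real.exp (-(γ * x)) = h x * Real.exp (-(γ * x)) := by
      simp only [hhdef]
      rw [sub_mul, mul_assoc, ← Real.exp_add]
      simp
    rw [key]
    exact mul_nonneg (hhpos x hx) (Real.exp_pos _).le
  have hwdiff : Differentiable ℝ w := fun x => (hw x).differentiableAt
  have hwmono : MonotoneOn w (Set.Ici 0) := by
    apply monotoneOn_of_deriv_nonneg (convex_Ici 0) hwdiff.continuous.continuousOn
      (fun x _ => (hwdiff x).differentiableWithinAt)
    intro x hx
    rw [interior_Ici] at hx
    rw [(hw x).deriv]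
    exact hwderiv x (le_of_lt hx)
  have hw0 : w 0 = 0 := by simp [hwdef, h0]
  intro x hx
  have hwx : 0 ≤ w x := by
    have := hwmono (Set.self_mem_Ici) (Set.mem_Ici.mpr hx) hx
    rwa [hw0] at this
  have : φ x * Real.exp (γ * x) + φ (-x) = w x * Real.exp (γ * x) := by
    simp only [hwdef]
    rw [add_mul, mul_assoc, ← Real.exp_add]
    simp
  rw [this]
  exact mul_nonneg hwx (Real.exp_pos _).le
end

section
/- Fix an integer k ≥ 2 and an integer n ≥ 2k; set α = 2k/(k+1), a = (n+α)/2, b = (α + n/k − 2)/2, c = n/2 (so that a > c > b + 1 > 1). Let φ(r) = F(a,b,c,−r²) for r ≥ 0, with F given by Euler's integral (valid since c > b > 0). Then φ is positive and smooth on [0,∞), and for every r > 0: φ''(r) + (k−1)·φ'(r)²/φ(r) + (n − α + 1)·φ'(r)/r ≤ 0. Equivalently, the function r ↦ φ(r)^k satisfies (φ^k)''(r) + (n − α + 1)(φ^k)'(r)/r ≤ 0 for all r > 0. -/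
open MeasureTheory Set intervalIntegral

namespace Stmt13Aux

lemma one_sub_mul_pos {t x : ℝ} (ht0 : 0 ≤ t) (ht1 : t ≤ 1) (hx : x < 1) :
    0 < 1 - t * x := by
  rcases le_or_gt x 0 with h | h
  · nlinarith
  · nlinarith

lemma one_sub_mul_ge {t y ε : ℝ} (ht0 : 0 ≤ t) (ht1 : t ≤ 1) (hε : 0 < ε)
    (hy : y ≤ 1 - ε) : min 1 ε ≤ 1 - t * y := by
  rcases le_or_gt y 0 with h | h
  · have : t * y ≤ 0 := mul_nonpos_of_nonneg_of_nonpos ht0 h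
    have := min_le_left (1:ℝ) ε
    linarith
  · have h1 : t * y ≤ y := by nlinarith
    have := min_le_right (1:ℝ) ε
    linarith

lemma aesm (p q e x : ℝ) (S : Set ℝ) : AEStronglyMeasurable
    (fun t : ℝ => t ^ p * (1 - t) ^ q * (1 - t * x) ^ e) (volume.restrict S) :=
  (by fun_prop : Measurable (fun t : ℝ => t ^ p * (1 - t) ^ q * (1 - t * x) ^ e)).aestronglyMeasurable

lemma beta_integrable {p q : ℝ} (hp : -1 < p) (hq : -1 < q) :
    IntervalIntegrable (fun t : ℝ => t ^ p * (1 - t) ^ q) volume 0 1 := by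
  have key : ∀ s : ℝ, -1 < s → ∀ t : ℝ, 0 < t → t ≤ 1/2 → (1 - t) ^ s ≤ max 1 ((1/2 : ℝ) ^ s) := by
    intro s hs t ht0 ht1
    rcases le_or_gt 0 s with h | h
    · exact le_trans (Real.rpow_le_one (by linarith) (by linarith) h) (le_max_left _ _)
    · exact le_trans (Real.rpow_le_rpow_of_nonpos (by norm_num) (by linarith) h.le)
        (le_max_right _ _)
  have h1 : IntervalIntegrable (fun t : ℝ => t ^ p * (1 - t) ^ q) volume 0 (1/2) := by
    rw [intervalIntegrable_iff, uIoc_of_le (by norm_num : (0:ℝ) ≤ 1/2)]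
    have hg : IntegrableOn (fun t : ℝ => max 1 ((1/2 : ℝ) ^ q) * t ^ p) (Ioc 0 (1/2)) volume := by
      have := (intervalIntegrable_rpow' (a := 0) (b := 1/2) hp).const_mul (max 1 ((1/2 : ℝ) ^ q))
      rwa [intervalIntegrable_iff, uIoc_of_le (by norm_num : (0:ℝ) ≤ 1/2)] at this
    refine Integrable.mono' hg ?_ ?_
    · exact (by fun_prop : Measurable (fun t : ℝ => t ^ p * (1 - t) ^ q)).aestronglyMeasurable
    · filter_upwards [ae_restrict_mem measurableSet_Ioc] with t ht
      have ht0 := ht.1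
      have ht1 := ht.2
      have h1t : (0:ℝ) < 1 - t := by linarith
      rw [Real.norm_eq_abs, abs_of_nonneg (by positivity)]
      have := key q hq t ht0 ht1
      have htp : (0:ℝ) ≤ t ^ p := by positivity
      nlinarith [Real.rpow_nonneg h1t.le q]
  have h2 : IntervalIntegrable (fun t : ℝ => t ^ p * (1 - t) ^ q) volume (1/2) 1 := by
    rw [intervalIntegrable_iff, uIoc_of_le (by norm_num : (1:ℝ)/2 ≤ 1)]
    have hg : IntegrableOn (fun t : ℝ => max 1 ((1/2 : ℝ) ^ p) * (1 - t) ^ q) (Ioc (1/2) 1) volume := by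
      have h0 := (intervalIntegrable_rpow' (a := 0) (b := 1/2) hq).comp_sub_left 1
      norm_num at h0
      have := (h0.symm.const_mul (max 1 ((1/2 : ℝ) ^ p)))
      rwa [intervalIntegrable_iff, uIoc_of_le (by norm_num : (1:ℝ)/2 ≤ 1)] at this
    refine Integrable.mono' hg ?_ ?_
    · exact (by fun_prop : Measurable (fun t : ℝ => t ^ p * (1 - t) ^ q)).aestronglyMeasurable
    · filter_upwards [ae_restrict_mem measurableSet_Ioc] with t ht
      have ht0 : (1:ℝ)/2 < t := ht.1
      have ht1 : t ≤ 1 := ht.2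
      have h1t : (0:ℝ) ≤ 1 - t := by linarith
      rw [Real.norm_eq_abs, abs_of_nonneg (by positivity)]
      have h1t' : (0:ℝ) < 1 - (1 - t) := by linarith
      have key2 : t ^ p ≤ max 1 ((1/2 : ℝ) ^ p) := by
        rcases le_or_gt 0 p with h | h
        · exact le_trans (Real.rpow_le_one (by linarith) ht1 h) (le_max_left _ _)
        · exact le_trans (Real.rpow_le_rpow_of_nonpos (by norm_num) (by linarith) h.le)
            (le_max_right _ _)
      have htq : (0:ℝ) ≤ (1-t) ^ q := Real.rpow_nonneg h1t q
      nlinarith [Real.rpow_nonneg (le_of_lt (show (0:ℝ) < t by linarith)) p]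
  exact h1.trans h2


lemma integ3 {p q e x : ℝ} (hp : -1 < p) (hq : -1 < q) (he : e ≤ 0) (hx : x < 1) :
    IntervalIntegrable (fun t : ℝ => t ^ p * (1 - t) ^ q * (1 - t * x) ^ e) volume 0 1 := by
  set m : ℝ := min 1 (1 - x) with hm
  have hm0 : 0 < m := lt_min one_pos (by linarith)
  rw [intervalIntegrable_iff, uIoc_of_le (by norm_num : (0:ℝ) ≤ 1)]
  have hg : IntegrableOn (fun t : ℝ => m ^ e * (t ^ p * (1 - t) ^ q)) (Ioc 0 1) volume := by
    have := (beta_integrable hp hq).const_mul (m ^ e)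
    rwa [intervalIntegrable_iff, uIoc_of_le (by norm_num : (0:ℝ) ≤ 1)] at this
  refine Integrable.mono' hg (aesm p q e x _) ?_
  filter_upwards [ae_restrict_mem measurableSet_Ioc] with t ht
  have ht0 : 0 < t := ht.1
  have ht1 : t ≤ 1 := ht.2
  have hbase : m ≤ 1 - t * x := one_sub_mul_ge ht0.le ht1 (by linarith) (by linarith)
  have h2 : (1 - t * x) ^ e ≤ m ^ e := Real.rpow_le_rpow_of_nonpos hm0 hbase he
  have hnn : (0:ℝ) ≤ t ^ p * (1 - t) ^ q * (1 - t * x) ^ e :=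
    mul_nonneg (mul_nonneg (Real.rpow_nonneg ht0.le _) (Real.rpow_nonneg (by linarith) _))
      (Real.rpow_nonneg (by linarith : (0:ℝ) ≤ 1 - t * x) _)
  rw [Real.norm_eq_abs, abs_of_nonneg hnn]
  have h3 : (0:ℝ) ≤ t ^ p * (1 - t) ^ q :=
    mul_nonneg (Real.rpow_nonneg ht0.le _) (Real.rpow_nonneg (by linarith) _)
  nlinarith [Real.rpow_nonneg (le_of_lt (lt_of_lt_of_le hm0 hbase)) e]

lemma integ3_pos {p q e x : ℝ} (hp : -1 < p) (hq : -1 < q) (he : e ≤ 0) (hx : x < 1) :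
    0 < ∫ t in (0:ℝ)..1, t ^ p * (1 - t) ^ q * (1 - t * x) ^ e := by
  refine intervalIntegral.intervalIntegral_pos_of_pos_on (integ3 hp hq he hx) ?_ one_pos
  intro t ht
  have h1 : 0 < 1 - t * x := one_sub_mul_pos ht.1.le ht.2.le hx
  exact mul_pos (mul_pos (Real.rpow_pos_of_pos ht.1 p)
    (Real.rpow_pos_of_pos (by linarith [ht.2] : (0:ℝ) < 1 - t) q)) (Real.rpow_pos_of_pos h1 e)

lemma ibp {p q e x : ℝ} (hp : 0 < p) (hq : 0 < q) (he : e ≤ 0) (hx : x ≤ 0) :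
    p * (∫ t in (0:ℝ)..1, t ^ (p-1) * (1 - t) ^ q * (1 - t * x) ^ e)
      + (-e * x) * (∫ t in (0:ℝ)..1, t ^ p * (1 - t) ^ q * (1 - t * x) ^ (e-1))
    = q * ∫ t in (0:ℝ)..1, t ^ p * (1 - t) ^ (q-1) * (1 - t * x) ^ e := by
  have hx1 : x < 1 := lt_of_le_of_lt hx one_pos
  have hi1 : IntervalIntegrable (fun t : ℝ => t ^ (p-1) * (1 - t) ^ q * (1 - t * x) ^ e)
      volume 0 1 := integ3 (by linarith) (by linarith) he hx1
  have hi2 : IntervalIntegrable (fun t : ℝ => t ^ p * (1 - t) ^ q * (1 - t * x) ^ (e-1))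
      volume 0 1 := integ3 (by linarith) (by linarith) (by linarith) hx1
  have hi3 : IntervalIntegrable (fun t : ℝ => t ^ p * (1 - t) ^ (q-1) * (1 - t * x) ^ e)
      volume 0 1 := integ3 (by linarith) (by linarith) he hx1
  set D : ℝ → ℝ := fun t => p * (t ^ (p-1) * (1 - t) ^ q * (1 - t * x) ^ e)
      + (-e * x) * (t ^ p * (1 - t) ^ q * (1 - t * x) ^ (e-1))
      - q * (t ^ p * (1 - t) ^ (q-1) * (1 - t * x) ^ e) with hD
  set Φ : ℝ → ℝ := fun t => t ^ p * (1 - t) ^ q * (1 - t * x) ^ e with hΦ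
  have hcont : ContinuousOn Φ (Icc 0 1) := by
    refine ContinuousOn.mul (ContinuousOn.mul ?_ ?_) ?_
    · exact continuousOn_id.rpow_const (fun t _ => Or.inr hp.le)
    · exact (continuous_const.sub continuous_id).continuousOn.rpow_const
        (fun t _ => Or.inr hq.le)
    · refine (continuous_const.sub (continuous_id.mul continuous_const)).continuousOn.rpow_const
        (fun t ht => Or.inl ?_)
      exact ne_of_gt (one_sub_mul_pos ht.1 ht.2 hx1)
  have hderiv : ∀ t ∈ Ioo (0:ℝ) 1, HasDerivAt Φ (D t) t := by
    intro t ht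
    have ht0 : 0 < t := ht.1
    have ht1 : t < 1 := ht.2
    have htx : 0 < 1 - t * x := one_sub_mul_pos ht0.le ht1.le hx1
    have h1 : HasDerivAt (fun s : ℝ => s ^ p) (p * t ^ (p-1)) t :=
      Real.hasDerivAt_rpow_const (Or.inl (ne_of_gt ht0))
    have hin2 : HasDerivAt (fun s : ℝ => 1 - s) (-1 : ℝ) t := by
      simpa using (hasDerivAt_id t).const_sub 1
    have h2 := hin2.rpow_const (p := q) (Or.inl (by intro h; linarith))
    have hin3 : HasDerivAt (fun s : ℝ => 1 - s * x) (-x) t := by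
      simpa using ((hasDerivAt_id t).mul_const x).const_sub 1
    have h3 := hin3.rpow_const (p := e) (Or.inl (ne_of_gt htx))
    have hall := (h1.fun_mul h2).fun_mul h3
    refine hall.congr_deriv ?_
    simp only [hD]
    ring
  have hDint : IntervalIntegrable D volume 0 1 := by
    exact ((hi1.const_mul p).add (hi2.const_mul (-e * x))).sub (hi3.const_mul q)
  have hftc := intervalIntegral.integral_eq_sub_of_hasDeriv_right_of_le (by norm_num : (0:ℝ) ≤ 1)
    hcont (fun t ht => (hderiv t ht).hasDerivWithinAt) hDint
  have hΦ1 : Φ 1 = 0 := by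
    simp only [hΦ]
    rw [show (1:ℝ) - 1 = 0 by norm_num, Real.zero_rpow (ne_of_gt hq)]
    ring
  have hΦ0 : Φ 0 = 0 := by
    simp only [hΦ]
    rw [Real.zero_rpow (ne_of_gt hp)]
    ring
  rw [hΦ1, hΦ0, sub_zero] at hftc
  have hsplit : ∫ t in (0:ℝ)..1, D t =
      p * (∫ t in (0:ℝ)..1, t ^ (p-1) * (1 - t) ^ q * (1 - t * x) ^ e)
      + (-e * x) * (∫ t in (0:ℝ)..1, t ^ p * (1 - t) ^ q * (1 - t * x) ^ (e-1))
      - q * (∫ t in (0:ℝ)..1, t ^ p * (1 - t) ^ (q-1) * (1 - t * x) ^ e) := by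
    simp only [hD]
    rw [intervalIntegral.integral_sub ((hi1.const_mul p).add (hi2.const_mul (-e * x)))
      (hi3.const_mul q), intervalIntegral.integral_add (hi1.const_mul p) (hi2.const_mul (-e * x)),
      intervalIntegral.integral_const_mul, intervalIntegral.integral_const_mul,
      intervalIntegral.integral_const_mul]
  rw [hsplit] at hftc
  linarith


/-- The family of Euler-type integrals: `j`-th derivative data. -/
noncomputable def W (a b c : ℝ) (j : ℕ) (x : ℝ) : ℝ :=
  ∫ t in (0:ℝ)..1, t ^ (b - 1 + j) * (1 - t) ^ (c - b - 1) * (1 - t * x) ^ (-a - j)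

lemma W_eq {a b c : ℝ} (j : ℕ) (p e x : ℝ) (hp : b - 1 + j = p) (he : -a - j = e) :
    W a b c j x = ∫ t in (0:ℝ)..1, t ^ p * (1 - t) ^ (c - b - 1) * (1 - t * x) ^ e := by
  subst hp he; rfl

section Wfacts

variable {a b c : ℝ} (ha : 0 < a) (hb : 0 < b) (hq : 0 < c - b - 1)

include ha hb hq in
lemma W_pos (j : ℕ) {x : ℝ} (hx : x < 1) : 0 < W a b c j x := by
  refine integ3_pos ?_ (by linarith) ?_ hx
  · have : (0:ℝ) ≤ j := Nat.cast_nonneg j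
    linarith
  · have : (0:ℝ) ≤ j := Nat.cast_nonneg j
    linarith

include ha hb hq in
lemma W_integrable (j : ℕ) {x : ℝ} (hx : x < 1) :
    IntervalIntegrable (fun t : ℝ => t ^ (b - 1 + j) * (1 - t) ^ (c - b - 1) * (1 - t * x) ^ (-a - j))
      volume 0 1 := by
  refine integ3 ?_ (by linarith) ?_ hx
  · have : (0:ℝ) ≤ j := Nat.cast_nonneg j
    linarith
  · have : (0:ℝ) ≤ j := Nat.cast_nonneg j
    linarith

include ha hb hq in
lemma W_hasDerivAt (j : ℕ) {x : ℝ} (hx : x < 1) :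
    HasDerivAt (W a b c j) ((a + j) * W a b c (j+1) x) x := by
  have hjr : (0:ℝ) ≤ j := Nat.cast_nonneg j
  set ε : ℝ := (1 - x)/2 with hε
  have hε0 : 0 < ε := by simp only [hε]; linarith
  set m : ℝ := min 1 ε with hm
  have hm0 : 0 < m := lt_min one_pos hε0
  have hball : ∀ y ∈ Metric.ball x ε, y ≤ 1 - ε := by
    intro y hy
    have := abs_lt.mp (mem_ball_iff_norm.mp hy)
    simp only [hε] at *
    linarith [this.2]
  have key := intervalIntegral.hasDerivAt_integral_of_dominated_loc_of_deriv_le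
    (F := fun y t => t ^ (b - 1 + j) * (1 - t) ^ (c - b - 1) * (1 - t * y) ^ (-a - j))
    (F' := fun y t => t ^ (b - 1 + j) * (1 - t) ^ (c - b - 1) *
      ((a + j) * (1 - t * y) ^ (-a - j - 1) * t))
    (x₀ := x) (a := 0) (b := 1) (μ := volume)
    (bound := fun t => ((a + j) * m ^ (-a - j - 1)) * (t ^ (b - 1) * (1 - t) ^ (c - b - 1)))
    (Metric.ball_mem_nhds x hε0) ?_ ?_ ?_ ?_ ?_ ?_
  · rcases key with ⟨-, hd⟩
    have hval : (∫ t in (0:ℝ)..1, t ^ (b - 1 + j) * (1 - t) ^ (c - b - 1) *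
        ((a + j) * (1 - t * x) ^ (-a - j - 1) * t)) = (a + j) * W a b c (j+1) x := by
      rw [W, ← intervalIntegral.integral_const_mul]
      refine intervalIntegral.integral_congr ?_
      intro t ht
      rw [uIcc_of_le (by norm_num : (0:ℝ) ≤ 1)] at ht
      beta_reduce
      push_cast
      rcases eq_or_lt_of_le ht.1 with h0 | h0
      · rw [← h0]
        rw [Real.zero_rpow (show (0:ℝ) < b - 1 + ((j:ℝ) + 1) by
          nlinarith [hjr]).ne']
        ring
      · rw [show b - 1 + ((j:ℝ) + 1) = (b - 1 + (j:ℝ)) + 1 by ring,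
          Real.rpow_add_one (ne_of_gt h0), show -a - ((j:ℝ) + 1) = -a - (j:ℝ) - 1 by ring]
        ring
    rw [hval] at hd
    exact hd
  · filter_upwards with y
    exact aesm _ _ _ _ _
  · exact W_integrable ha hb hq j hx
  · exact ((by fun_prop : Measurable (fun t : ℝ => t ^ (b - 1 + j) * (1 - t) ^ (c - b - 1) *
      ((a + j) * (1 - t * x) ^ (-a - j - 1) * t))).aestronglyMeasurable)
  · filter_upwards with t ht y hy
    rw [uIoc_of_le (by norm_num : (0:ℝ) ≤ 1)] at ht
    have ht0 : 0 < t := ht.1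
    have ht1 : t ≤ 1 := ht.2
    have hbase : m ≤ 1 - t * y := one_sub_mul_ge ht0.le ht1 hε0 (hball y hy)
    have htx : 0 < 1 - t * y := lt_of_lt_of_le hm0 hbase
    have e1 : t ^ (b - 1 + j) * t ≤ t ^ (b - 1) := by
      rw [← Real.rpow_add_one (ne_of_gt ht0)]
      exact Real.rpow_le_rpow_of_exponent_ge ht0 ht1 (by linarith)
    have e2 : (1 - t * y) ^ (-a - j - 1) ≤ m ^ (-a - j - 1) :=
      Real.rpow_le_rpow_of_nonpos hm0 hbase (by linarith)
    have hnn : (0:ℝ) ≤ t ^ (b - 1 + j) * (1 - t) ^ (c - b - 1) *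
        ((a + j) * (1 - t * y) ^ (-a - j - 1) * t) := by
      have := Real.rpow_nonneg ht0.le (b - 1 + j)
      have := Real.rpow_nonneg (by linarith : (0:ℝ) ≤ 1 - t) (c - b - 1)
      have := Real.rpow_nonneg htx.le (-a - j - 1)
      have : (0:ℝ) ≤ a + j := by linarith
      positivity
    rw [Real.norm_eq_abs, abs_of_nonneg hnn]
    calc t ^ (b - 1 + j) * (1 - t) ^ (c - b - 1) * ((a + j) * (1 - t * y) ^ (-a - j - 1) * t)
        = (a + j) * ((t ^ (b - 1 + j) * t) * ((1 - t) ^ (c - b - 1) *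
            (1 - t * y) ^ (-a - j - 1))) := by ring
      _ ≤ (a + j) * ((t ^ (b - 1)) * ((1 - t) ^ (c - b - 1) * m ^ (-a - j - 1))) := by
          have hw : (0:ℝ) ≤ (1 - t) ^ (c - b - 1) :=
            Real.rpow_nonneg (by linarith : (0:ℝ) ≤ 1 - t) _
          have h1 : (0:ℝ) ≤ a + j := by linarith
          have h2 : (0:ℝ) ≤ t ^ (b - 1 + j) * t :=
            mul_nonneg (Real.rpow_nonneg ht0.le _) ht0.le
          have h3 : (0:ℝ) ≤ m ^ (-a - j - 1) := Real.rpow_nonneg hm0.le _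
          have h4 : (0:ℝ) ≤ (1 - t * y) ^ (-a - j - 1) := Real.rpow_nonneg htx.le _
          have h5 : (0:ℝ) ≤ t ^ (b-1) := Real.rpow_nonneg ht0.le _
          nlinarith [mul_le_mul e1 (mul_le_mul_of_nonneg_left e2 hw) (mul_nonneg hw h4) h5]
      _ = ((a + j) * m ^ (-a - j - 1)) * (t ^ (b - 1) * (1 - t) ^ (c - b - 1)) := by ring
  · exact (beta_integrable (by linarith) (by linarith)).const_mul _
  · filter_upwards with t ht y hy
    rw [uIoc_of_le (by norm_num : (0:ℝ) ≤ 1)] at ht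
    have ht0 : 0 < t := ht.1
    have ht1 : t ≤ 1 := ht.2
    have hbase : m ≤ 1 - t * y := one_sub_mul_ge ht0.le ht1 hε0 (hball y hy)
    have htx : 0 < 1 - t * y := lt_of_lt_of_le hm0 hbase
    have hin : HasDerivAt (fun y : ℝ => 1 - t * y) (-t) y := by
      simpa using ((hasDerivAt_id y).const_mul t).const_sub 1
    have h3 := hin.rpow_const (p := -a - j) (Or.inl (ne_of_gt htx))
    have := h3.const_mul (t ^ (b - 1 + j) * (1 - t) ^ (c - b - 1))
    refine this.congr_deriv ?_
    ring

include ha hb hq in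
lemma W_contDiffOn : ∀ (N : ℕ) (j : ℕ), ContDiffOn ℝ N (W a b c j) (Set.Iio 1) := by
  intro N
  induction N with
  | zero =>
    intro j
    rw [show ((0:ℕ) : WithTop ℕ∞) = 0 by rfl, contDiffOn_zero]
    intro x hx
    exact ((W_hasDerivAt ha hb hq j (hx : x < 1)).continuousAt).continuousWithinAt
  | succ N ih =>
    intro j
    rw [show ((N+1:ℕ) : WithTop ℕ∞) = (N : WithTop ℕ∞) + 1 by push_cast; rfl,
      contDiffOn_succ_iff_deriv_of_isOpen isOpen_Iio]
    refine ⟨fun x hx => ((W_hasDerivAt ha hb hq j (hx : x < 1)).differentiableAt).differentiableWithinAt,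
      by simp, ?_⟩
    refine ContDiffOn.congr ((ih (j+1)).const_smul ((a + j : ℝ))) ?_
    intro x hx
    simp only [Pi.smul_apply, smul_eq_mul]
    exact (W_hasDerivAt ha hb hq j (hx : x < 1)).deriv

end Wfacts

end Stmt13Aux

/-- The Gaussian hypergeometric function via Euler's integral (valid for `c > b > 0`). -/
noncomputable def Fhyp (a b c x : ℝ) : ℝ :=
  (Real.Gamma c / (Real.Gamma b * Real.Gamma (c - b))) *
    ∫ t in (0:ℝ)..1, t ^ (b - 1) * (1 - t) ^ (c - b - 1) * (1 - t * x) ^ (-a)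

set_option maxHeartbeats 2000000 in
open Stmt13Aux in
/-- For the Hessian Sobolev parameters, `φ(r) = F(a,b,c,-r²)` is positive and smooth on
`[0,∞)` and satisfies `φ'' + (k-1)(φ')²/φ + (n-α+1)φ'/r ≤ 0`; equivalently
`(φ^k)'' + (n-α+1)(φ^k)'/r ≤ 0` on `(0,∞)`. -/
theorem stmt_13 (k n : ℕ) (hk : 2 ≤ k) (hn : 2 * k ≤ n)
    (α a b c : ℝ)
    (hα : α = 2 * k / (k + 1)) (ha : a = ((n : ℝ) + α) / 2)
    (hb : b = (α + (n : ℝ) / k - 2) / 2) (hc : c = (n : ℝ) / 2)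
    (φ : ℝ → ℝ) (hφ : φ = fun r => Fhyp a b c (-r ^ 2)) :
    (∀ r ≥ (0:ℝ), 0 < φ r) ∧ ContDiffOn ℝ (⊤ : ℕ∞) φ (Set.Ici 0) ∧
    (∀ r > (0:ℝ),
      deriv (deriv φ) r + ((k : ℝ) - 1) * (deriv φ r) ^ 2 / φ r +
        ((n : ℝ) - α + 1) * deriv φ r / r ≤ 0) ∧
    (∀ r > (0:ℝ),
      deriv (deriv (fun t => φ t ^ k)) r +
        ((n : ℝ) - α + 1) * deriv (fun t => φ t ^ k) r / r ≤ 0) := by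
  subst hφ
  -- basic numeric facts
  have hK2 : (2:ℝ) ≤ (k:ℝ) := by exact_mod_cast hk
  have hN : 2*(k:ℝ) ≤ (n:ℝ) := by exact_mod_cast hn
  have hK0 : (0:ℝ) < k := by linarith
  have hα0 : 0 < α := by rw [hα]; positivity
  have hα2 : α < 2 := by
    rw [hα, div_lt_iff₀ (by linarith : (0:ℝ) < (k:ℝ)+1)]; linarith
  have hnk2 : (2:ℝ) ≤ (n:ℝ)/(k:ℝ) := (le_div_iff₀ hK0).mpr (by linarith)
  have hb0 : 0 < b := by rw [hb]; linarith
  have hN4 : (4:ℝ) ≤ n := by linarith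
  have ha0 : 0 < a := by rw [ha]; linarith
  have hc0 : 0 < c := by rw [hc]; linarith
  have hD : (n:ℝ)/(k:ℝ) ≤ (n:ℝ)/2 := by
    apply div_le_div_of_nonneg_left (by linarith) (by norm_num) hK2
  have hq0 : 0 < c - b - 1 := by rw [hb, hc]; linarith
  have hcb : 0 < c - b := by linarith
  have hα' : α * ((k:ℝ)+1) = 2*(k:ℝ) := by
    rw [hα]; field_simp
  have hDK : (k:ℝ) * ((n:ℝ)/(k:ℝ)) = (n:ℝ) := by field_simp
  have hab : a = (k:ℝ)*b + α := by
    rw [ha, hb]; linear_combination (-1/2)*hα' + (-1/2)*hDK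
  have hma : (n:ℝ) - α + 1 = 2*((k:ℝ)*b) + 1 := by
    linear_combination (-2)*ha + 2*hab
  -- the constant and the rewriting of Fhyp into W-form
  set C : ℝ := Real.Gamma c / (Real.Gamma b * Real.Gamma (c - b)) with hCdef
  have hC : 0 < C :=
    div_pos (Real.Gamma_pos_of_pos hc0)
      (mul_pos (Real.Gamma_pos_of_pos hb0) (Real.Gamma_pos_of_pos hcb))
  have hrw : (fun r : ℝ => Fhyp a b c (-r ^ 2)) =
      (fun r : ℝ => C * W a b c 0 (-r ^ 2)) := by
    funext r
    rw [Fhyp, W_eq 0 (b-1) (-a) (-r^2) (by push_cast; ring) (by push_cast; ring), hCdef]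
  rw [hrw]
  have hx1 : ∀ r : ℝ, (-r^2 : ℝ) < 1 := fun r => by nlinarith [sq_nonneg r]
  have hWp : ∀ (j : ℕ) (r : ℝ), 0 < W a b c j (-r^2) :=
    fun j r => W_pos ha0 hb0 hq0 j (hx1 r)
  -- derivative infrastructure
  have hg' : ∀ r : ℝ, HasDerivAt (fun s : ℝ => -s^2) (-(2*r)) r := fun r => by
    simpa using (hasDerivAt_pow 2 r).fun_neg
  have hu : ∀ (j : ℕ) (r : ℝ), HasDerivAt (fun s : ℝ => W a b c j (-s^2))
      ((a + j) * W a b c (j+1) (-r^2) * (-(2*r))) r :=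
    fun j r => (W_hasDerivAt ha0 hb0 hq0 j (hx1 r)).comp (h₂ := W a b c j) r (hg' r)
  have hψd0 : ∀ r : ℝ, HasDerivAt (fun s : ℝ => C * W a b c 0 (-s^2))
      (C * (a * W a b c 1 (-r^2) * (-(2*r)))) r := fun r => by
    have := (hu 0 r).const_mul C
    refine this.congr_deriv ?_
    push_cast
    ring
  have hderiv1 : deriv (fun r : ℝ => C * W a b c 0 (-r^2)) =
      (fun r : ℝ => C * (a * W a b c 1 (-r^2) * (-(2*r)))) :=
    funext fun r => (hψd0 r).deriv
  have hψd1 : ∀ r : ℝ, HasDerivAt (fun s : ℝ => C * (a * W a b c 1 (-s^2) * (-(2*s))))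
      (C * (a * ((a+1) * W a b c 2 (-r^2) * (-(2*r))) * (-(2*r))
        + a * W a b c 1 (-r^2) * (-2))) r := fun r => by
    have h1 : HasDerivAt (fun s : ℝ => a * W a b c 1 (-s^2))
        (a * ((a+1) * W a b c 2 (-r^2) * (-(2*r)))) r := by
      refine ((hu 1 r).const_mul a).congr_deriv ?_
      push_cast
      ring
    have h2 : HasDerivAt (fun s : ℝ => -(2*s)) (-2 : ℝ) r := by
      simpa using ((hasDerivAt_id r).const_mul 2).fun_neg
    have := (h1.fun_mul h2).const_mul C
    refine this.congr_deriv ?_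
    try ring
  -- the key integral inequalities and main pointwise estimate
  have hmain : ∀ r : ℝ, 0 < r →
      C * (a * ((a+1) * W a b c 2 (-r^2) * (-(2*r))) * (-(2*r))
        + a * W a b c 1 (-r^2) * (-2))
      + ((k:ℝ) - 1) * (C * (a * W a b c 1 (-r^2) * (-(2*r))))^2 / (C * W a b c 0 (-r^2))
      + ((n:ℝ) - α + 1) * (C * (a * W a b c 1 (-r^2) * (-(2*r)))) / r ≤ 0 := by
    intro r hr
    have hr0 : r ≠ 0 := ne_of_gt hr
    have hX0 : 0 < W a b c 0 (-r^2) := hWp 0 r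
    have hX1 : 0 < W a b c 1 (-r^2) := hWp 1 r
    have hX2 : 0 < W a b c 2 (-r^2) := hWp 2 r
    have hxneg : (-r^2 : ℝ) ≤ 0 := by nlinarith [sq_nonneg r]
    -- key inequality 1
    have hK1 := ibp (p := b) (q := c-b-1) (e := -a) (x := -r^2) hb0 hq0 (by linarith) hxneg
    rw [← W_eq 0 (b-1) (-a) (-r^2) (by push_cast; ring) (by push_cast; ring),
        ← W_eq 1 b (-a-1) (-r^2) (by push_cast; ring) (by push_cast; ring)] at hK1
    have hK1pos : 0 < ∫ t in (0:ℝ)..1, t ^ b * (1-t) ^ (c-b-1-1) * (1 - t * -r^2) ^ (-a) :=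
      integ3_pos (by linarith) (by linarith) (by linarith) (hx1 r)
    have key1 : a * r^2 * W a b c 1 (-r^2) ≤ b * W a b c 0 (-r^2) := by
      nlinarith [mul_pos hq0 hK1pos]
    -- key inequality 2
    have hK2' := ibp (p := b+1) (q := c-b-1) (e := -a-1) (x := -r^2)
      (by linarith) hq0 (by linarith) hxneg
    rw [← W_eq 1 (b+1-1) (-a-1) (-r^2) (by push_cast; ring) (by push_cast; ring),
        ← W_eq 2 (b+1) (-a-1-1) (-r^2) (by push_cast; ring) (by push_cast; ring)] at hK2'
    have hK2pos : 0 < ∫ t in (0:ℝ)..1, t ^ (b+1) * (1-t) ^ (c-b-1-1) * (1 - t * -r^2) ^ (-a-1) :=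
      integ3_pos (by linarith) (by linarith) (by linarith) (hx1 r)
    have key2 : (a+1) * r^2 * W a b c 2 (-r^2) ≤ (b+1) * W a b c 1 (-r^2) := by
      nlinarith [mul_pos hq0 hK2pos]
    -- conclude
    have hfrac : a * r^2 * (W a b c 1 (-r^2)^2 / W a b c 0 (-r^2)) ≤ b * W a b c 1 (-r^2) := by
      rw [show a * r^2 * (W a b c 1 (-r^2)^2 / W a b c 0 (-r^2))
          = (a * r^2 * W a b c 1 (-r^2)^2) / W a b c 0 (-r^2) by ring,
        div_le_iff₀ hX0]
      nlinarith [mul_le_mul_of_nonneg_left key1 hX1.le]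
    calc C * (a * ((a+1) * W a b c 2 (-r^2) * (-(2*r))) * (-(2*r))
          + a * W a b c 1 (-r^2) * (-2))
        + ((k:ℝ) - 1) * (C * (a * W a b c 1 (-r^2) * (-(2*r))))^2 / (C * W a b c 0 (-r^2))
        + ((n:ℝ) - α + 1) * (C * (a * W a b c 1 (-r^2) * (-(2*r)))) / r
        = 4*C*a*(a+1)*r^2*(W a b c 2 (-r^2)) - 2*C*a*(W a b c 1 (-r^2))
          + 4*((k:ℝ)-1)*C*a^2*r^2*(W a b c 1 (-r^2)^2 / W a b c 0 (-r^2))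
          - 2*C*a*((n:ℝ) - α + 1)*(W a b c 1 (-r^2)) := by
          field_simp
          ring
      _ = 4*C*a*(a+1)*r^2*(W a b c 2 (-r^2)) - 2*C*a*(W a b c 1 (-r^2))
          + 4*((k:ℝ)-1)*C*a^2*r^2*(W a b c 1 (-r^2)^2 / W a b c 0 (-r^2))
          - 2*C*a*(2*((k:ℝ)*b) + 1)*(W a b c 1 (-r^2)) := by rw [hma]
      _ ≤ 0 := by
          have hint1 : 4*C*a*((a+1) * r^2 * W a b c 2 (-r^2))
              ≤ 4*C*a*((b+1) * W a b c 1 (-r^2)) :=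
            mul_le_mul_of_nonneg_left key2 (by positivity)
          have hcoef : (0:ℝ) ≤ 4*C*((k:ℝ)-1) :=
            mul_nonneg (by linarith) (by linarith)
          have hint2 : 4*C*((k:ℝ)-1)*(a * r^2 * (W a b c 1 (-r^2)^2 / W a b c 0 (-r^2)))
              ≤ 4*C*((k:ℝ)-1)*(b * W a b c 1 (-r^2)) :=
            mul_le_mul_of_nonneg_left hfrac hcoef
          nlinarith [hint1, hint2]
  refine ⟨?_, ?_, ?_, ?_⟩
  · intro r _
    exact mul_pos hC (hWp 0 r)
  · -- smoothness
    refine ContDiff.contDiffOn ?_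
    rw [contDiff_infty]
    intro N
    rw [contDiff_iff_contDiffAt]
    intro r
    have houter : ContDiffAt ℝ N (W a b c 0) (-r^2) :=
      (W_contDiffOn ha0 hb0 hq0 N 0).contDiffAt (Iio_mem_nhds (hx1 r))
    have hinner : ContDiffAt ℝ N (fun r : ℝ => -r^2) r :=
      ((contDiff_id.pow 2).neg).contDiffAt
    exact contDiffAt_const.mul (houter.fun_comp r hinner)
  · -- third conjunct
    intro r hr
    rw [hderiv1]
    beta_reduce
    rw [(hψd1 r).deriv]
    exact hmain r hr
  · -- fourth conjunct
    intro r hr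
    have hΦ : 0 < C * W a b c 0 (-r^2) := mul_pos hC (hWp 0 r)
    have hDk : ∀ s : ℝ, HasDerivAt (fun t : ℝ => (C * W a b c 0 (-t^2))^k)
        ((k:ℝ) * (C * W a b c 0 (-s^2))^(k-1) * (C * (a * W a b c 1 (-s^2) * (-(2*s))))) s :=
      fun s => (hψd0 s).pow k
    have hd1k : deriv (fun t : ℝ => (C * W a b c 0 (-t^2))^k) =
        fun s : ℝ => (k:ℝ) * (C * W a b c 0 (-s^2))^(k-1)
          * (C * (a * W a b c 1 (-s^2) * (-(2*s)))) :=
      funext fun s => (hDk s).deriv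
    have h1 : HasDerivAt (fun s : ℝ => (k:ℝ) * (C * W a b c 0 (-s^2))^(k-1))
        ((k:ℝ) * (((k-1:ℕ):ℝ) * (C * W a b c 0 (-r^2))^(k-1-1)
          * (C * (a * W a b c 1 (-r^2) * (-(2*r)))))) r :=
      ((hψd0 r).pow (k-1)).const_mul (k:ℝ)
    have hD2k : HasDerivAt (fun s : ℝ => (k:ℝ) * (C * W a b c 0 (-s^2))^(k-1)
          * (C * (a * W a b c 1 (-s^2) * (-(2*s)))))
        (((k:ℝ) * (((k-1:ℕ):ℝ) * (C * W a b c 0 (-r^2))^(k-1-1)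
            * (C * (a * W a b c 1 (-r^2) * (-(2*r))))))
          * (C * (a * W a b c 1 (-r^2) * (-(2*r))))
         + ((k:ℝ) * (C * W a b c 0 (-r^2))^(k-1))
          * (C * (a * ((a+1) * W a b c 2 (-r^2) * (-(2*r))) * (-(2*r))
            + a * W a b c 1 (-r^2) * (-2)))) r :=
      h1.mul (hψd1 r)
    show deriv (deriv (fun t : ℝ => (C * W a b c 0 (-t^2))^k)) r
        + ((n:ℝ) - α + 1) * deriv (fun t : ℝ => (C * W a b c 0 (-t^2))^k) r / r ≤ 0
    rw [hd1k, hD2k.deriv]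
    have hk1 : ((k-1:ℕ):ℝ) = (k:ℝ) - 1 := by
      rw [Nat.cast_sub (by omega : 1 ≤ k)]; norm_num
    have hpow1 : (C * W a b c 0 (-r^2))^(k-1) = (C * W a b c 0 (-r^2))^(k-2) * (C * W a b c 0 (-r^2)) := by
      rw [← pow_succ]
      congr 1
      omega
    have hpow2 : (C * W a b c 0 (-r^2))^(k-1-1) = (C * W a b c 0 (-r^2))^(k-2) := rfl
    have hE := hmain r hr
    have hr0 : r ≠ 0 := ne_of_gt hr
    have heq : ((k:ℝ) * (((k-1:ℕ):ℝ) * (C * W a b c 0 (-r^2))^(k-1-1)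
            * (C * (a * W a b c 1 (-r^2) * (-(2*r))))))
          * (C * (a * W a b c 1 (-r^2) * (-(2*r))))
         + ((k:ℝ) * (C * W a b c 0 (-r^2))^(k-1))
          * (C * (a * ((a+1) * W a b c 2 (-r^2) * (-(2*r))) * (-(2*r))
            + a * W a b c 1 (-r^2) * (-2)))
         + ((n:ℝ) - α + 1) * ((fun s : ℝ => (k:ℝ) * (C * W a b c 0 (-s^2))^(k-1)
          * (C * (a * W a b c 1 (-s^2) * (-(2*s))))) r) / r
        = ((k:ℝ) * (C * W a b c 0 (-r^2))^(k-1)) *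
          (C * (a * ((a+1) * W a b c 2 (-r^2) * (-(2*r))) * (-(2*r))
            + a * W a b c 1 (-r^2) * (-2))
          + ((k:ℝ) - 1) * (C * (a * W a b c 1 (-r^2) * (-(2*r))))^2 / (C * W a b c 0 (-r^2))
          + ((n:ℝ) - α + 1) * (C * (a * W a b c 1 (-r^2) * (-(2*r)))) / r) := by
      beta_reduce
      rw [hk1, hpow1, hpow2]
      have hW0ne : W a b c 0 (-r^2) ≠ 0 := (hWp 0 r).ne'
      field_simp
      ring
    rw [heq]
    exact mul_nonpos_of_nonneg_of_nonpos
      (mul_nonneg (Nat.cast_nonneg k) (pow_nonneg hΦ.le _)) hE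
end

section
/- Let a, b, c be real numbers with c > b > 0 and a > b + 1. Define f(t) = F(c−a, b, c, t) / F(c−a, b+1, c+1, t) for t ≤ 1, with F given by Euler's integral. Then f is differentiable at t = 1 (as a left derivative) and f'(1) = a(a−c) / (c(a−b−1)). -/
open MeasureTheory intervalIntegral Set Filter Real
open scoped Topology

/-- Integrability of the beta-type integrand. -/
lemma betaInt {u v : ℝ} (hu : -1 < u) (hv : -1 < v) :
    IntervalIntegrable (fun t : ℝ => t ^ u * (1 - t) ^ v) volume 0 1 := by
  have h1 : IntervalIntegrable (fun t : ℝ => t ^ u * (1 - t) ^ v) volume 0 (1/2) := by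
    apply (intervalIntegrable_rpow' hu).mul_continuousOn
    apply ContinuousOn.rpow_const (by fun_prop)
    intro t ht
    rw [uIcc_of_le (by norm_num)] at ht
    left; intro h; have := ht.2; nlinarith [sub_eq_zero.mp h]
  have h2 : IntervalIntegrable (fun t : ℝ => t ^ u * (1 - t) ^ v) volume (1/2) 1 := by
    have base : IntervalIntegrable (fun t : ℝ => (1 - t) ^ v) volume (1/2) 1 := by
      have := ((intervalIntegrable_rpow' hv (a := 0) (b := 1/2)).comp_sub_left 1).symm
      norm_num at this
      exact this
    apply base.continuousOn_mul
    apply ContinuousOn.rpow_const (by fun_prop)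
    intro t ht
    rw [uIcc_of_le (by norm_num)] at ht
    left; intro h; have := ht.1; rw [h] at this; norm_num at this
  exact h1.trans h2

/-- Value of the real Beta integral. -/
lemma betaVal {u v : ℝ} (hu : 0 < u) (hv : 0 < v) :
    ∫ t in (0:ℝ)..1, t ^ (u - 1) * (1 - t) ^ (v - 1)
      = Real.Gamma u * Real.Gamma v / Real.Gamma (u + v) := by
  have h := Complex.Gamma_mul_Gamma_eq_betaIntegral (s := (u:ℂ)) (t := (v:ℂ))
    (by simpa using hu) (by simpa using hv)
  have hbeta : Complex.betaIntegral (u:ℂ) (v:ℂ)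
      = ((∫ t in (0:ℝ)..1, t ^ (u - 1) * (1 - t) ^ (v - 1) : ℝ) : ℂ) := by
    rw [Complex.betaIntegral, ← intervalIntegral.integral_ofReal]
    refine intervalIntegral.integral_congr fun t ht => ?_
    rw [uIcc_of_le zero_le_one] at ht
    rw [Complex.ofReal_mul, Complex.ofReal_cpow ht.1, Complex.ofReal_cpow (by linarith [ht.2])]
    push_cast
    ring
  rw [hbeta, ← Complex.ofReal_add, Complex.Gamma_ofReal, Complex.Gamma_ofReal,
    Complex.Gamma_ofReal, ← Complex.ofReal_mul, ← Complex.ofReal_mul] at h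
  have h' := Complex.ofReal_injective h
  have hne : Real.Gamma (u + v) ≠ 0 := (Real.Gamma_pos_of_pos (by linarith)).ne'
  field_simp
  linarith [h']

lemma keyDeriv {p q r : ℝ} (hp : -1 < p) (hq : -1 < q) (hqr : 0 < q + r) :
    HasDerivWithinAt (fun x => ∫ t in (0:ℝ)..1, t ^ p * (1 - t) ^ q * (1 - t * x) ^ r)
      (∫ t in (0:ℝ)..1, t ^ p * (1 - t) ^ q * (-(r * t) * (1 - t) ^ (r - 1)))
      (Set.Iic 1) 1 := by
  have hae : ∀ᵐ t : ℝ ∂volume, t ≠ 1 := by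
    rw [ae_iff]
    simpa using Real.volume_singleton (x := 1)
  -- integrability of the integrand for x < 1
  have hgx : ∀ x : ℝ, x < 1 →
      IntervalIntegrable (fun t => t ^ p * (1 - t) ^ q * (1 - t * x) ^ r) volume 0 1 := by
    intro x hx
    apply (betaInt hp hq).mul_continuousOn
    apply ContinuousOn.rpow_const (by fun_prop)
    intro t ht
    rw [uIcc_of_le zero_le_one] at ht
    left
    have : t * x < 1 := by
      rcases le_total x 0 with h | h
      · nlinarith [mul_nonpos_of_nonneg_of_nonpos ht.1 h]
      · nlinarith [mul_le_of_le_one_left h ht.2]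
    intro hcon; rw [sub_eq_zero] at hcon; linarith [hcon.symm]
  have hg1 : IntervalIntegrable (fun t => t ^ p * (1 - t) ^ q * (1 - t * 1) ^ r) volume 0 1 := by
    rw [intervalIntegrable_iff_integrableOn_Ioo_of_le zero_le_one]
    have h2 := betaInt hp (show (-1:ℝ) < q + r by linarith)
    rw [intervalIntegrable_iff_integrableOn_Ioo_of_le zero_le_one] at h2
    apply h2.congr_fun _ measurableSet_Ioo
    intro t ht
    simp only [mul_one]
    rw [Real.rpow_add (by linarith [ht.2] : (0:ℝ) < 1 - t)]
    ring
  -- the dominating function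
  set bound : ℝ → ℝ := fun t => |r| * (t ^ (p+1) * (1-t) ^ (q + min (r-1) 0)) with hbound_def
  have hbd : IntervalIntegrable bound volume 0 1 := by
    apply IntervalIntegrable.const_mul
    apply betaInt (by linarith)
    rcases le_total (r-1) 0 with h | h
    · rw [min_eq_left h]; linarith
    · rw [min_eq_right h]; linarith
  set F : ℝ → ℝ → ℝ := fun x t =>
    (t ^ p * (1 - t) ^ q * (1 - t * x) ^ r - t ^ p * (1 - t) ^ q * (1 - t * 1) ^ r) / (x - 1)
    with hF_def
  set L : ℝ → ℝ := fun t => t ^ p * (1 - t) ^ q * (-(r * t) * (1 - t) ^ (r - 1)) with hL_def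
  have hev : ∀ᶠ x in 𝓝[Set.Iio (1:ℝ)] 1, x ∈ Set.Ioo (0:ℝ) 1 := by
    filter_upwards [self_mem_nhdsWithin,
      eventually_nhdsWithin_of_eventually_nhds (eventually_gt_nhds (by norm_num : (0:ℝ) < 1))]
      with x hx1 hx0
    exact ⟨hx0, hx1⟩
  -- derivative of the inner function
  have hder : ∀ t : ℝ, t ∈ Set.Ioo (0:ℝ) 1 → ∀ s : ℝ, t * s < 1 →
      HasDerivAt (fun y => (1 - t * y) ^ r) (r * (1 - t * s) ^ (r-1) * (-t)) s := by
    intro t ht s hs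
    have hinner : HasDerivAt (fun y : ℝ => 1 - t * y) (-t) s := by
      simpa using ((hasDerivAt_id s).const_mul t).const_sub (1:ℝ)
    exact (Real.hasDerivAt_rpow_const (Or.inl (by linarith : (1:ℝ) - t * s ≠ 0))).comp s hinner
  have key : Tendsto (fun x => ∫ t in (0:ℝ)..1, F x t) (𝓝[Set.Iio (1:ℝ)] 1)
      (𝓝 (∫ t in (0:ℝ)..1, L t)) := by
    apply intervalIntegral.tendsto_integral_filter_of_dominated_convergence bound
    · -- measurability
      refine Eventually.of_forall fun x => Measurable.aestronglyMeasurable (by fun_prop)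
    · -- bound
      filter_upwards [hev] with x hx
      filter_upwards [hae] with t ht htI
      rw [uIoc_of_le zero_le_one] at htI
      have ht' : t ∈ Set.Ioo (0:ℝ) 1 := ⟨htI.1, lt_of_le_of_ne htI.2 ht⟩
      set A : ℝ := t ^ p * (1 - t) ^ q with hA_def
      have hA : 0 ≤ A := by
        apply mul_nonneg (Real.rpow_nonneg ht'.1.le p) (Real.rpow_nonneg (by linarith [ht'.2]) q)
      set C : ℝ := |r| * (1-t) ^ (min (r-1) 0) * t with hC_def
      have hts : ∀ s : ℝ, s ∈ Set.Icc x 1 → t * s < 1 ∧ 1 - t ≤ 1 - t * s ∧ t * s ≥ 0 := by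
        intro s hs
        have h1 : t * s ≤ t := mul_le_of_le_one_right ht'.1.le hs.2
        have h2 : 0 ≤ t * s := mul_nonneg ht'.1.le (le_trans hx.1.le hs.1)
        exact ⟨by linarith [ht'.2], by linarith, h2⟩
      have hd : ∀ s ∈ Set.Icc x 1, HasDerivWithinAt (fun y => (1 - t * y) ^ r)
          (r * (1 - t * s) ^ (r-1) * (-t)) (Set.Icc x 1) s := fun s hs =>
        (hder t ht' s (hts s hs).1).hasDerivWithinAt
      have hC : ∀ s ∈ Set.Icc x 1, ‖r * (1 - t * s) ^ (r-1) * (-t)‖ ≤ C := by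
        intro s hs
        obtain ⟨h1, h2, h3⟩ := hts s hs
        have hpos : (0:ℝ) < 1 - t * s := by linarith [ht'.2]
        have hbnd : (1 - t * s) ^ (r-1) ≤ (1-t) ^ (min (r-1) 0) := by
          rcases le_total (r-1) 0 with h | h
          · rw [min_eq_left h]
            exact Real.rpow_le_rpow_of_nonpos (by linarith [ht'.2]) h2 h
          · rw [min_eq_right h, Real.rpow_zero]
            exact Real.rpow_le_one hpos.le (by linarith) h
        rw [norm_mul, norm_mul, Real.norm_eq_abs, Real.norm_eq_abs, Real.norm_eq_abs,
          abs_neg, abs_of_pos ht'.1, abs_of_nonneg (Real.rpow_nonneg hpos.le _)]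
        rw [hC_def]
        have : |r| * (1 - t * s) ^ (r-1) * t ≤ |r| * ((1-t) ^ (min (r-1) 0)) * t :=
          mul_le_mul_of_nonneg_right (mul_le_mul_of_nonneg_left hbnd (abs_nonneg r)) ht'.1.le
        linarith
      have hmvt := Convex.norm_image_sub_le_of_norm_hasDerivWithin_le hd hC (convex_Icc x 1)
        (Set.right_mem_Icc.mpr hx.2.le) (Set.left_mem_Icc.mpr hx.2.le)
      -- hmvt : ‖(1-t*x)^r - (1-t*1)^r‖ ≤ C * ‖x - 1‖
      have hxabs : |x - 1| = 1 - x := by rw [abs_of_neg (by linarith [hx.2])]; ring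
      rw [hF_def]
      simp only []
      rw [Real.norm_eq_abs, abs_div,
        show t ^ p * (1 - t) ^ q * (1 - t * x) ^ r - t ^ p * (1 - t) ^ q * (1 - t * 1) ^ r
          = A * ((1 - t * x) ^ r - (1 - t * 1) ^ r) by rw [hA_def]; ring,
        abs_mul, abs_of_nonneg hA]
      rw [div_le_iff₀ (by rw [hxabs]; linarith [hx.2] : (0:ℝ) < |x - 1|)]
      have step1 : A * |(1 - t * x) ^ r - (1 - t * 1) ^ r| ≤ A * (C * |x - 1|) := by
        apply mul_le_mul_of_nonneg_left _ hA
        simpa [Real.norm_eq_abs] using hmvt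
      apply le_trans step1
      have heq : A * C = bound t := by
        rw [hA_def, hC_def, hbound_def]
        simp only []
        rw [Real.rpow_add_one (ne_of_gt ht'.1) p,
          Real.rpow_add (by linarith [ht'.2] : (0:ℝ) < 1 - t) q (min (r-1) 0)]
        ring
      rw [show A * (C * |x-1|) = (A * C) * |x-1| by ring, heq]
    · exact hbd
    · -- pointwise convergence
      filter_upwards [hae] with t ht htI
      rw [uIoc_of_le zero_le_one] at htI
      have ht' : t ∈ Set.Ioo (0:ℝ) 1 := ⟨htI.1, lt_of_le_of_ne htI.2 ht⟩
      have ht1 : t * 1 < 1 := by rw [mul_one]; exact ht'.2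
      have hd1 := hder t ht' 1 ht1
      have hslope := hasDerivAt_iff_tendsto_slope.mp hd1
      have hmono : 𝓝[Set.Iio (1:ℝ)] 1 ≤ 𝓝[≠] (1:ℝ) :=
        nhdsWithin_mono 1 (fun y hy => ne_of_lt hy)
      have h2 := (hslope.mono_left hmono).const_mul (t ^ p * (1 - t) ^ q)
      have heq : t ^ p * (1 - t) ^ q * (r * (1 - t * 1) ^ (r-1) * (-t)) = L t := by
        rw [hL_def]; simp only [mul_one]; ring
      rw [heq] at h2
      apply h2.congr
      intro x
      rw [slope_def_field, hF_def]
      simp only []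
      ring
  rw [hasDerivWithinAt_iff_tendsto_slope, Set.Iic_diff_right]
  refine Tendsto.congr' ?_ key
  filter_upwards [hev] with x hx
  rw [slope_def_field, hF_def]
  simp only []
  rw [intervalIntegral.integral_div, intervalIntegral.integral_sub (hgx x hx.2) hg1]

lemma aeIoo : ∀ᵐ t : ℝ ∂volume, t ∈ Set.uIoc (0:ℝ) 1 → t ∈ Set.Ioo (0:ℝ) 1 := by
  have hae : ∀ᵐ t : ℝ ∂volume, t ≠ 1 := by
    rw [ae_iff]; simpa using Real.volume_singleton (x := 1)
  filter_upwards [hae] with t ht htI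
  rw [uIoc_of_le zero_le_one] at htI
  exact ⟨htI.1, lt_of_le_of_ne htI.2 ht⟩

lemma valAtOne {p q r u v : ℝ} (hu : 0 < u) (hv : 0 < v) (hpu : p = u - 1)
    (hqv : q + r = v - 1) :
    ∫ t in (0:ℝ)..1, t ^ p * (1 - t) ^ q * (1 - t * 1) ^ r
      = Real.Gamma u * Real.Gamma v / Real.Gamma (u + v) := by
  rw [← betaVal hu hv]
  apply intervalIntegral.integral_congr_ae
  filter_upwards [aeIoo] with t ht htI
  have ht' := ht htI
  have hpos : (0:ℝ) < 1 - t := by linarith [ht'.2]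
  rw [mul_one, hpu, ← hqv, Real.rpow_add hpos]
  ring

lemma derivVal {p q r u v : ℝ} (hu : 0 < u) (hv : 0 < v) (hpu : p = u - 2)
    (hqv : q + r = v) :
    ∫ t in (0:ℝ)..1, t ^ p * (1 - t) ^ q * (-(r * t) * (1 - t) ^ (r - 1))
      = -r * (Real.Gamma u * Real.Gamma v / Real.Gamma (u + v)) := by
  have : ∫ t in (0:ℝ)..1, t ^ p * (1 - t) ^ q * (-(r * t) * (1 - t) ^ (r - 1))
      = ∫ t in (0:ℝ)..1, -r * (t ^ (u - 1) * (1 - t) ^ (v - 1)) := by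
    apply intervalIntegral.integral_congr_ae
    filter_upwards [aeIoo] with t ht htI
    have ht' := ht htI
    have hpos : (0:ℝ) < 1 - t := by linarith [ht'.2]
    have e1 : t ^ (u - 1) = t ^ p * t := by
      rw [hpu, ← Real.rpow_add_one (ne_of_gt ht'.1), show u - 2 + 1 = u - 1 by ring]
    have e2 : (1 - t) ^ (v - 1) = (1 - t) ^ q * (1 - t) ^ (r - 1) := by
      rw [← Real.rpow_add hpos, show q + (r - 1) = v - 1 by linarith]
    rw [e1, e2]; ring
  rw [this, intervalIntegral.integral_const_mul, betaVal hu hv]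


/-- Left derivative of the Gaussian ratio at `t = 1`:
`f'(1) = a(a-c)/(c(a-b-1))` when `c > b > 0` and `a > b + 1`. -/
theorem stmt_16 (a b c : ℝ) (hb : 0 < b) (hcb : b < c) (hab : b + 1 < a) :
    HasDerivWithinAt
      (fun t => Fhyp (c - a) b c t / Fhyp (c - a) (b + 1) (c + 1) t)
      (a * (a - c) / (c * (a - b - 1))) (Set.Iic 1) 1 := by
  set K1 : ℝ := Real.Gamma c / (Real.Gamma b * Real.Gamma (c - b)) with hK1
  set K2 : ℝ := Real.Gamma (c + 1) / (Real.Gamma (b + 1) * Real.Gamma (c + 1 - (b + 1))) with hK2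
  have hN : HasDerivWithinAt (fun x => Fhyp (c - a) b c x)
      (K1 * ((c - a) * (Real.Gamma (b + 1) * Real.Gamma (a - b - 1) / Real.Gamma a)))
      (Set.Iic 1) 1 := by
    simp only [Fhyp, neg_sub, ← hK1]
    have h := (keyDeriv (p := b - 1) (q := c - b - 1) (r := a - c)
      (by linarith) (by linarith) (by linarith)).const_mul K1
    rwa [derivVal (p := b - 1) (q := c - b - 1) (r := a - c) (u := b + 1) (v := a - b - 1)
      (by linarith) (by linarith) (by ring) (by ring),
      show b + 1 + (a - b - 1) = a by ring, neg_sub] at h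
  have hD : HasDerivWithinAt (fun x => Fhyp (c - a) (b + 1) (c + 1) x)
      (K2 * ((c - a) * (Real.Gamma (b + 2) * Real.Gamma (a - b - 1) / Real.Gamma (a + 1))))
      (Set.Iic 1) 1 := by
    simp only [Fhyp, neg_sub, ← hK2]
    have h := (keyDeriv (p := b + 1 - 1) (q := c + 1 - (b + 1) - 1) (r := a - c)
      (by linarith) (by linarith) (by linarith)).const_mul K2
    rwa [derivVal (p := b + 1 - 1) (q := c + 1 - (b + 1) - 1) (r := a - c) (u := b + 2)
      (v := a - b - 1) (by linarith) (by linarith) (by ring) (by ring),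
      show b + 2 + (a - b - 1) = a + 1 by ring, neg_sub] at h
  have hN1 : Fhyp (c - a) b c 1 = K1 * (Real.Gamma b * Real.Gamma (a - b) / Real.Gamma a) := by
    simp only [Fhyp, neg_sub, ← hK1]
    rw [valAtOne (p := b - 1) (q := c - b - 1) (r := a - c) (u := b) (v := a - b)
      hb (by linarith) (by ring) (by ring), show b + (a - b) = a by ring]
  have hD1 : Fhyp (c - a) (b + 1) (c + 1) 1
      = K2 * (Real.Gamma (b + 1) * Real.Gamma (a - b) / Real.Gamma (a + 1)) := by
    simp only [Fhyp, neg_sub, ← hK2]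
    rw [valAtOne (p := b + 1 - 1) (q := c + 1 - (b + 1) - 1) (r := a - c) (u := b + 1)
      (v := a - b) (by linarith) (by linarith) (by ring) (by ring),
      show b + 1 + (a - b) = a + 1 by ring]
  -- positivity facts
  have gb := Real.Gamma_pos_of_pos hb
  have gcb := Real.Gamma_pos_of_pos (show (0:ℝ) < c - b by linarith)
  have gc := Real.Gamma_pos_of_pos (show (0:ℝ) < c by linarith)
  have ga := Real.Gamma_pos_of_pos (show (0:ℝ) < a by linarith)
  have gab := Real.Gamma_pos_of_pos (show (0:ℝ) < a - b by linarith)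
  have gab1 := Real.Gamma_pos_of_pos (show (0:ℝ) < a - b - 1 by linarith)
  have gb1 := Real.Gamma_pos_of_pos (show (0:ℝ) < b + 1 by linarith)
  have ga1 := Real.Gamma_pos_of_pos (show (0:ℝ) < a + 1 by linarith)
  have hK2pos : 0 < K2 := by
    rw [hK2, show c + 1 - (b + 1) = c - b by ring]
    have := Real.Gamma_pos_of_pos (show (0:ℝ) < c + 1 by linarith)
    positivity
  have hDne : Fhyp (c - a) (b + 1) (c + 1) 1 ≠ 0 := by
    rw [hD1]; positivity
  have hfinal : HasDerivWithinAt (fun t => Fhyp (c - a) b c t / Fhyp (c - a) (b + 1) (c + 1) t) _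
      (Set.Iic 1) 1 := hN.div hD hDne
  convert hfinal using 1
  rw [hN1, hD1, hK1, hK2]
  -- Gamma recurrences
  have hgb2 : Real.Gamma (b + 2) = (b + 1) * Real.Gamma (b + 1) := by
    have h := Real.Gamma_add_one (show b + 1 ≠ 0 by linarith)
    rwa [show b + 1 + 1 = b + 2 by ring] at h
  have hgab' : Real.Gamma (a - b) = (a - b - 1) * Real.Gamma (a - b - 1) := by
    have h := Real.Gamma_add_one (show a - b - 1 ≠ 0 by linarith)
    rwa [show a - b - 1 + 1 = a - b by ring] at h
  rw [hgb2, hgab', Real.Gamma_add_one (ne_of_gt hb),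
    Real.Gamma_add_one (show a ≠ 0 by linarith),
    Real.Gamma_add_one (show c ≠ 0 by linarith),
    show c + 1 - (b + 1) = c - b by ring]
  have hane : a ≠ 0 := by linarith
  have hcne : c ≠ 0 := by linarith
  have hbne : b ≠ 0 := ne_of_gt hb
  have hab1 : a - b - 1 ≠ 0 := by linarith
  field_simp
  ring
end

section
/- Fix an integer k ≥ 2 and an integer n ≥ 2k; set α = 2k/(k+1), a = (n+α)/2, b = (α + n/k − 2)/2, c = n/2, d₁ = 2a + b − 2c, d₂ = c − a + 1, d₃ = 4a(2c − a − b). Then the function g(t) = [d₁ t − d₂(1−t) + √((d₁ t − d₂(1−t))² + d₃ t)] / (2c) is concave on [0, ∞). -/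
lemma affine_concave (m b : ℝ) : ConcaveOn ℝ (Set.Ici 0) (fun t : ℝ => m * t + b) := by
  refine ⟨convex_Ici 0, fun x _ y _ wa wb hwa hwb hab => ?_⟩
  simp only [smul_eq_mul]
  have : wa * (m * x + b) + wb * (m * y + b) = m * (wa * x + wb * y) + b := by
    linear_combination b * hab
  linarith [this.le]

lemma sqrt_geo_mean (P₁ Q₁ P₂ Q₂ wa wb : ℝ) (hP₁ : 0 ≤ P₁) (hQ₁ : 0 ≤ Q₁)
    (hP₂ : 0 ≤ P₂) (hQ₂ : 0 ≤ Q₂) (hwa : 0 ≤ wa) (hwb : 0 ≤ wb) :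
    wa * Real.sqrt (P₁ * Q₁) + wb * Real.sqrt (P₂ * Q₂) ≤
      Real.sqrt ((wa * P₁ + wb * P₂) * (wa * Q₁ + wb * Q₂)) := by
  rw [Real.sqrt_mul hP₁, Real.sqrt_mul hP₂]
  have hl : 0 ≤ wa * (Real.sqrt P₁ * Real.sqrt Q₁) + wb * (Real.sqrt P₂ * Real.sqrt Q₂) := by
    positivity
  rw [show Real.sqrt ((wa * P₁ + wb * P₂) * (wa * Q₁ + wb * Q₂)) =
      Real.sqrt ((wa * P₁ + wb * P₂) * (wa * Q₁ + wb * Q₂)) from rfl]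
  rw [← Real.sqrt_sq hl]
  apply Real.sqrt_le_sqrt
  have e1 := Real.sq_sqrt hP₁
  have e2 := Real.sq_sqrt hQ₁
  have e3 := Real.sq_sqrt hP₂
  have e4 := Real.sq_sqrt hQ₂
  have f11 : (Real.sqrt P₁ * Real.sqrt Q₁) ^ 2 = P₁ * Q₁ := by rw [mul_pow, e1, e2]
  have f22 : (Real.sqrt P₂ * Real.sqrt Q₂) ^ 2 = P₂ * Q₂ := by rw [mul_pow, e3, e4]
  have amgm : 2 * ((Real.sqrt P₁ * Real.sqrt Q₁) * (Real.sqrt P₂ * Real.sqrt Q₂)) ≤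
      P₁ * Q₂ + P₂ * Q₁ := by
    have g1 : (Real.sqrt P₁ * Real.sqrt Q₂) ^ 2 = P₁ * Q₂ := by rw [mul_pow, e1, e4]
    have g2 : (Real.sqrt P₂ * Real.sqrt Q₁) ^ 2 = P₂ * Q₁ := by rw [mul_pow, e3, e2]
    nlinarith [sq_nonneg (Real.sqrt P₁ * Real.sqrt Q₂ - Real.sqrt P₂ * Real.sqrt Q₁), g1, g2]
  have hmul := mul_le_mul_of_nonneg_left amgm (mul_nonneg hwa hwb)
  have g11 : wa ^ 2 * (Real.sqrt P₁ * Real.sqrt Q₁) ^ 2 = wa ^ 2 * (P₁ * Q₁) := by rw [f11]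
  have g22 : wb ^ 2 * (Real.sqrt P₂ * Real.sqrt Q₂) ^ 2 = wb ^ 2 * (P₂ * Q₂) := by rw [f22]
  nlinarith [hmul, g11, g22]

lemma sqrt_quad_concave (A B C : ℝ) (hA : 0 < A) (hB : 0 ≤ B) (hC : 0 ≤ C)
    (hD : 4 * A * C ≤ B ^ 2) :
    ConcaveOn ℝ (Set.Ici 0) (fun t => Real.sqrt (A * t ^ 2 + B * t + C)) := by
  set s := Real.sqrt (B ^ 2 - 4 * A * C) with hs_def
  have hs0 : 0 ≤ s := Real.sqrt_nonneg _
  have hs2 : s ^ 2 = B ^ 2 - 4 * A * C := Real.sq_sqrt (by linarith)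
  have hsB : s ≤ B := by
    nlinarith [hs2]
  set r := Real.sqrt A with hr_def
  have hr0 : 0 < r := Real.sqrt_pos.2 hA
  have hr2 : r ^ 2 = A := Real.sq_sqrt hA.le
  have key : ∀ t : ℝ, A * t ^ 2 + B * t + C =
      (r * t + (B + s) / (2 * r)) * (r * t + (B - s) / (2 * r)) := by
    intro t
    field_simp
    linear_combination (4 * C - 4 * r ^ 2 * t ^ 2) * hr2 + hs2
  refine ⟨convex_Ici 0, fun x hx y hy wa wb hwa hwb hab => ?_⟩
  simp only [smul_eq_mul, key]
  have hx0 : (0:ℝ) ≤ x := hx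
  have hy0 : (0:ℝ) ≤ y := hy
  have hBs1 : 0 ≤ (B + s) / (2 * r) := by positivity
  have hBs2 : 0 ≤ (B - s) / (2 * r) := by
    apply div_nonneg (by linarith) (by linarith)
  have hP₁ : 0 ≤ r * x + (B + s) / (2 * r) := by positivity
  have hQ₁ : 0 ≤ r * x + (B - s) / (2 * r) := by
    have : 0 ≤ r * x := by positivity
    linarith
  have hP₂ : 0 ≤ r * y + (B + s) / (2 * r) := by positivity
  have hQ₂ : 0 ≤ r * y + (B - s) / (2 * r) := by
    have : 0 ≤ r * y := by positivity
    linarith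
  have := sqrt_geo_mean _ _ _ _ wa wb hP₁ hQ₁ hP₂ hQ₂ hwa hwb
  have harg : (wa * (r * x + (B + s) / (2 * r)) + wb * (r * y + (B + s) / (2 * r))) *
      (wa * (r * x + (B - s) / (2 * r)) + wb * (r * y + (B - s) / (2 * r))) =
      (wa * (r * x + (B + s) / (2 * r)) + wb * (r * y + (B + s) / (2 * r))) *
      (wa * (r * x + (B - s) / (2 * r)) + wb * (r * y + (B - s) / (2 * r))) := rfl
  calc wa * Real.sqrt ((r * x + (B + s) / (2 * r)) * (r * x + (B - s) / (2 * r)))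
        + wb * Real.sqrt ((r * y + (B + s) / (2 * r)) * (r * y + (B - s) / (2 * r)))
      ≤ Real.sqrt ((wa * (r * x + (B + s) / (2 * r)) + wb * (r * y + (B + s) / (2 * r))) *
          (wa * (r * x + (B - s) / (2 * r)) + wb * (r * y + (B - s) / (2 * r)))) := this
    _ = Real.sqrt ((r * (wa * x + wb * y) + (B + s) / (2 * r)) *
          (r * (wa * x + wb * y) + (B - s) / (2 * r))) := by
        congr 1
        have h1 : wa * ((B + s) / (2 * r)) + wb * ((B + s) / (2 * r)) = (B + s) / (2 * r) := by
          rw [← add_mul, hab, one_mul]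
        have h2 : wa * ((B - s) / (2 * r)) + wb * ((B - s) / (2 * r)) = (B - s) / (2 * r) := by
          rw [← add_mul, hab, one_mul]
        ring_nf
        linear_combination ((B+s)/(2*r) * (r * (wa*x+wb*y)) + (B-s)/(2*r) * (r*(wa*x+wb*y)) + ((B+s)/(2*r))*((B-s)/(2*r)) * (wa + wb + 1)) * hab

set_option maxHeartbeats 1000000 in
/-- For the Hessian Sobolev parameters, the function
`g(t) = [d₁t - d₂(1-t) + √((d₁t - d₂(1-t))² + d₃t)]/(2c)` is concave on `[0,∞)`. -/
theorem stmt_17 (k n : ℕ) (hk : 2 ≤ k) (hn : 2 * k ≤ n)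
    (α a b c d₁ d₂ d₃ : ℝ)
    (hα : α = 2 * k / (k + 1)) (ha : a = ((n : ℝ) + α) / 2)
    (hb : b = (α + (n : ℝ) / k - 2) / 2) (hc : c = (n : ℝ) / 2)
    (hd₁ : d₁ = 2 * a + b - 2 * c) (hd₂ : d₂ = c - a + 1)
    (hd₃ : d₃ = 4 * a * (2 * c - a - b)) :
    ConcaveOn ℝ (Set.Ici 0)
      (fun t => (d₁ * t - d₂ * (1 - t) +
        Real.sqrt ((d₁ * t - d₂ * (1 - t)) ^ 2 + d₃ * t)) / (2 * c)) := by
  have hK : (2:ℝ) ≤ (k:ℝ) := by exact_mod_cast hk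
  have hN : 2 * (k:ℝ) ≤ (n:ℝ) := by exact_mod_cast hn
  have hk0 : (0:ℝ) < (k:ℝ) := by linarith
  have hk0' : ((k:ℝ)) ≠ 0 := ne_of_gt hk0
  have hk1 : ((k:ℝ) + 1) ≠ 0 := by positivity
  have hc0 : 0 < c := by rw [hc]; linarith
  -- component positivity facts
  have ha0 : 0 < a := by
    rw [ha, hα]; rw [div_pos_iff]; left
    constructor
    · have : 0 ≤ 2*(k:ℝ)/((k:ℝ)+1) := by positivity
      linarith
    · norm_num
  have hcab : 0 < 2 * c - a - b := by
    rw [ha, hb, hc, hα]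
    rw [show 2 * ((n:ℝ)/2) - ((n:ℝ) + 2*(k:ℝ)/((k:ℝ)+1))/2 - (2*(k:ℝ)/((k:ℝ)+1) + (n:ℝ)/(k:ℝ) - 2)/2
        = ((k:ℝ) - 1) * ((n:ℝ)*((k:ℝ)+1) - 2*(k:ℝ)) / (2*(k:ℝ)*((k:ℝ)+1)) by field_simp; ring]
    apply div_pos
    · apply mul_pos (by linarith)
      nlinarith
    · positivity
  have hd₃0 : 0 < d₃ := by
    rw [hd₃]; positivity
  have hd₂0 : 0 < d₂ := by
    rw [hd₂, hc, ha, hα]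
    rw [show (n:ℝ)/2 - ((n:ℝ) + 2*(k:ℝ)/((k:ℝ)+1))/2 + 1 = 1/((k:ℝ)+1) by field_simp; ring]
    positivity
  have hS0 : 0 < d₁ + d₂ := by
    rw [hd₁, hd₂, ha, hb, hc, hα]
    rw [show 2*(((n:ℝ) + 2*(k:ℝ)/((k:ℝ)+1))/2) + (2*(k:ℝ)/((k:ℝ)+1) + (n:ℝ)/(k:ℝ) - 2)/2
        - 2*((n:ℝ)/2) + ((n:ℝ)/2 - ((n:ℝ) + 2*(k:ℝ)/((k:ℝ)+1))/2 + 1)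
        = (4*(k:ℝ)^2 + (n:ℝ)*((k:ℝ)+1)) / (2*(k:ℝ)*((k:ℝ)+1)) by field_simp; ring]
    positivity
  have hgap : 0 ≤ d₃ - 4 * d₂ * (d₁ + d₂) := by
    rw [hd₃, hd₁, hd₂, ha, hb, hc, hα]
    rw [show 4 * (((n:ℝ) + 2*(k:ℝ)/((k:ℝ)+1))/2) *
        (2*((n:ℝ)/2) - ((n:ℝ) + 2*(k:ℝ)/((k:ℝ)+1))/2 - (2*(k:ℝ)/((k:ℝ)+1) + (n:ℝ)/(k:ℝ) - 2)/2)
        - 4 * ((n:ℝ)/2 - ((n:ℝ) + 2*(k:ℝ)/((k:ℝ)+1))/2 + 1) *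
        (2*(((n:ℝ) + 2*(k:ℝ)/((k:ℝ)+1))/2) + (2*(k:ℝ)/((k:ℝ)+1) + (n:ℝ)/(k:ℝ) - 2)/2
        - 2*((n:ℝ)/2) + ((n:ℝ)/2 - ((n:ℝ) + 2*(k:ℝ)/((k:ℝ)+1))/2 + 1))
        = (((k:ℝ) - 1)*((n:ℝ)^2*((k:ℝ)+1)^2 - 4*(k:ℝ)^2) - 8*(k:ℝ)^2 - 2*(n:ℝ)*((k:ℝ)+1))
          / ((k:ℝ)*((k:ℝ)+1)^2) by field_simp; ring]
    apply div_nonneg _ (by positivity)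
    have hu : (0:ℝ) ≤ (n:ℝ) - 2*(k:ℝ) := by linarith
    have hv : (0:ℝ) ≤ (k:ℝ) - 2 := by linarith
    nlinarith [mul_nonneg (pow_nonneg hu 0) (pow_nonneg hv 1),
      mul_nonneg (pow_nonneg hu 0) (pow_nonneg hv 2),
      mul_nonneg (pow_nonneg hu 0) (pow_nonneg hv 3),
      mul_nonneg (pow_nonneg hu 0) (pow_nonneg hv 4),
      mul_nonneg (pow_nonneg hu 0) (pow_nonneg hv 5),
      mul_nonneg (pow_nonneg hu 1) (pow_nonneg hv 0),
      mul_nonneg (pow_nonneg hu 1) (pow_nonneg hv 1),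
      mul_nonneg (pow_nonneg hu 1) (pow_nonneg hv 2),
      mul_nonneg (pow_nonneg hu 1) (pow_nonneg hv 3),
      mul_nonneg (pow_nonneg hu 1) (pow_nonneg hv 4),
      mul_nonneg (pow_nonneg hu 2) (pow_nonneg hv 0),
      mul_nonneg (pow_nonneg hu 2) (pow_nonneg hv 1),
      mul_nonneg (pow_nonneg hu 2) (pow_nonneg hv 2),
      mul_nonneg (pow_nonneg hu 2) (pow_nonneg hv 3)]
  -- set up quadratic coefficients
  set A := (d₁ + d₂) ^ 2 with hA_def
  set B := d₃ - 2 * d₂ * (d₁ + d₂) with hB_def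
  set C := d₂ ^ 2 with hC_def
  have hA : 0 < A := by positivity
  have hB : 0 ≤ B := by nlinarith [mul_pos hd₂0 hS0]
  have hC : 0 ≤ C := sq_nonneg _
  have hdisc : 4 * A * C ≤ B ^ 2 := by
    nlinarith [mul_nonneg hd₃0.le hgap]
  have hconc := (affine_concave (d₁ + d₂) (-d₂)).add (sqrt_quad_concave A B C hA hB hC hdisc)
  have hsmul := hconc.smul (c := 1/(2*c)) (by positivity)
  refine (congrArg (ConcaveOn ℝ (Set.Ici 0)) ?_).mpr hsmul
  funext t
  simp only [smul_eq_mul, Pi.add_apply]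
  rw [show (d₁ * t - d₂ * (1 - t)) ^ 2 + d₃ * t = A * t ^ 2 + B * t + C by
    rw [hA_def, hB_def, hC_def]; ring]
  rw [show d₁ * t - d₂ * (1 - t) = (d₁ + d₂) * t + -d₂ by ring]
  ring
end

section
/- Let a, b, c be real numbers with −1 < a < 0 and c > b > 0. Define φ(x) = F(a, b, c, x) / F(a, b+1, c+1, x) for x < 1, with F given by Euler's integral. Then φ is positive on (−∞, 1) and log φ is convex on (−∞, 1); that is, the Gaussian ratio φ is logarithmically convex on (−∞, 1). -/
open MeasureTheory Set Real Filter
open scoped ENNReal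

noncomputable def J (b c : ℝ) (k : ℕ) (p : ℝ) (x : ℝ) : ℝ :=
  ∫ t in Ioo (0:ℝ) 1, t ^ (b - 1) * (1 - t) ^ (c - b - 1) * t ^ k * (1 - t * x) ^ p

lemma one_sub_mul_pos {x t : ℝ} (hx : x < 1) (ht : t ∈ Ioo (0:ℝ) 1) : 0 < 1 - t * x := by
  rcases le_or_gt x 0 with h | h
  · nlinarith [ht.1, ht.2]
  · nlinarith [ht.1, ht.2]

lemma rpow_le_add {r p m M : ℝ} (hm : 0 < m) (h1 : m ≤ r) (h2 : r ≤ M) :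
    r ^ p ≤ m ^ p + M ^ p := by
  rcases le_or_gt 0 p with h | h
  · have h3 : r ^ p ≤ M ^ p := Real.rpow_le_rpow (by linarith) h2 h
    have h4 : (0:ℝ) ≤ m ^ p := Real.rpow_nonneg hm.le p
    linarith
  · have h3 : r ^ p ≤ m ^ p := Real.rpow_le_rpow_of_nonpos hm h1 h.le
    have h4 : (0:ℝ) ≤ M ^ p := Real.rpow_nonneg (by linarith) p
    linarith

lemma kernel_lb {x t : ℝ} (hx : x < 1) (ht : t ∈ Ioo (0:ℝ) 1) :
    min 1 (1 - x) ≤ 1 - t * x := by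
  rcases le_or_gt x 0 with h | h
  · have : t * x ≤ 0 := mul_nonpos_of_nonneg_of_nonpos ht.1.le h
    calc min 1 (1-x) ≤ 1 := min_le_left _ _
    _ ≤ 1 - t*x := by linarith
  · have : t * x ≤ x := by nlinarith [ht.2]
    calc min 1 (1-x) ≤ 1 - x := min_le_right _ _
    _ ≤ 1 - t*x := by linarith

lemma kernel_ub {x t : ℝ} (ht : t ∈ Ioo (0:ℝ) 1) : 1 - t * x ≤ 1 + |x| := by
  nlinarith [neg_abs_le x, abs_nonneg x, ht.1, ht.2]

lemma contOn_integrand {b c x : ℝ} (hx : x < 1) (k : ℕ) (p : ℝ) :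
    ContinuousOn (fun t : ℝ => t ^ (b - 1) * (1 - t) ^ (c - b - 1) * t ^ k * (1 - t * x) ^ p)
      (Ioo 0 1) := by
  apply ContinuousOn.mul
  apply ContinuousOn.mul
  apply ContinuousOn.mul
  · exact continuousOn_id.rpow_const fun t ht => Or.inl (ne_of_gt ht.1)
  · exact (continuous_const.sub continuous_id).continuousOn.rpow_const
      fun t ht => Or.inl (by intro h; simp at h; linarith [ht.2])
  · exact (continuous_pow k).continuousOn
  · exact ((continuous_const.sub (continuous_id.mul continuous_const)).continuousOn).rpow_const
      fun t ht => Or.inl (ne_of_gt (one_sub_mul_pos hx ht))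

lemma integrableOn_w {b c : ℝ} (hb : 0 < b) (hcb : b < c) :
    IntegrableOn (fun t : ℝ => t ^ (b - 1) * (1 - t) ^ (c - b - 1)) (Ioo 0 1) := by
  have h := Complex.betaIntegral_convergent (u := (b:ℂ)) (v := ((c - b : ℝ):ℂ))
    (by simpa using hb) (by simpa using sub_pos.mpr hcb)
  have h2 : IntegrableOn (fun x : ℝ => (x:ℂ) ^ ((b:ℂ) - 1) * (1 - (x:ℂ)) ^ (((c-b:ℝ):ℂ) - 1))
      (Ioo 0 1) := (h.1).mono_set Ioo_subset_Ioc_self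
  have h3 : IntegrableOn (fun x : ℝ => ‖(x:ℂ) ^ ((b:ℂ) - 1) * (1 - (x:ℂ)) ^ (((c-b:ℝ):ℂ) - 1)‖)
      (Ioo 0 1) := h2.norm
  apply h3.congr_fun ?_ measurableSet_Ioo
  intro t ht
  have h1t : (0:ℝ) < 1 - t := by linarith [ht.2]
  simp only []
  rw [norm_mul]
  rw [show (1 - (t:ℂ)) = ((1 - t : ℝ) : ℂ) by push_cast; ring]
  rw [Complex.norm_cpow_eq_rpow_re_of_pos ht.1, Complex.norm_cpow_eq_rpow_re_of_pos h1t]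
  simp


lemma integrable_J {b c : ℝ} (hb : 0 < b) (hcb : b < c) {x : ℝ} (hx : x < 1) (k : ℕ) (p : ℝ) :
    IntegrableOn (fun t : ℝ => t ^ (b - 1) * (1 - t) ^ (c - b - 1) * t ^ k * (1 - t * x) ^ p)
      (Ioo 0 1) := by
  set m := min 1 (1 - x) with hm
  set M := 1 + |x| with hM
  have hm0 : 0 < m := lt_min one_pos (by linarith)
  apply Integrable.mono' (((integrableOn_w hb hcb).const_mul (m ^ p + M ^ p)))
  · exact (contOn_integrand hx k p).aestronglyMeasurable measurableSet_Ioo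
  · filter_upwards [ae_restrict_mem measurableSet_Ioo] with t ht
    have ht0 := ht.1
    have ht1 := ht.2
    have hu : 0 < 1 - t * x := one_sub_mul_pos hx ht
    have h1 : |t ^ (b-1) * (1-t) ^ (c-b-1) * t ^ k * (1 - t*x) ^ p|
        = t ^ (b-1) * (1-t) ^ (c-b-1) * t ^ k * (1 - t*x) ^ p := by
      apply abs_of_nonneg
      have := Real.rpow_nonneg ht0.le (b-1)
      have : (0:ℝ) ≤ (1-t) ^ (c-b-1) := Real.rpow_nonneg (by linarith) _
      positivity
    rw [Real.norm_eq_abs, h1]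
    have hker : (1 - t*x) ^ p ≤ m ^ p + M ^ p :=
      rpow_le_add hm0 (kernel_lb hx ht) (kernel_ub ht)
    have htk : t ^ k ≤ 1 := pow_le_one₀ ht0.le ht1.le
    have hw : (0:ℝ) ≤ t ^ (b-1) * (1-t) ^ (c-b-1) := by
      have := Real.rpow_nonneg ht0.le (b-1)
      have : (0:ℝ) ≤ (1-t) ^ (c-b-1) := Real.rpow_nonneg (by linarith) _
      positivity
    have hkp : (0:ℝ) ≤ t ^ k := pow_nonneg ht0.le k
    calc t ^ (b-1) * (1-t) ^ (c-b-1) * t ^ k * (1 - t*x) ^ p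
        ≤ t ^ (b-1) * (1-t) ^ (c-b-1) * 1 * (m ^ p + M ^ p) := by
          apply mul_le_mul
          · exact mul_le_mul_of_nonneg_left htk hw
          · exact hker
          · exact Real.rpow_nonneg hu.le p
          · nlinarith
      _ = (m ^ p + M ^ p) * (t ^ (b-1) * (1-t) ^ (c-b-1)) := by ring

lemma J_pos {b c : ℝ} (hb : 0 < b) (hcb : b < c) {x : ℝ} (hx : x < 1) (k : ℕ) (p : ℝ) :
    0 < J b c k p x := by
  rw [J]
  have hi := integrable_J hb hcb hx k p
  have hpos : ∀ t ∈ Ioo (0:ℝ) 1,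
      0 < t ^ (b - 1) * (1 - t) ^ (c - b - 1) * t ^ k * (1 - t * x) ^ p := by
    intro t ht
    have h1 : 0 < t ^ (b-1) := Real.rpow_pos_of_pos ht.1 _
    have h2 : (0:ℝ) < (1-t) ^ (c-b-1) := Real.rpow_pos_of_pos (by linarith [ht.2]) _
    have h3 : 0 < t ^ k := pow_pos ht.1 k
    have h4 : (0:ℝ) < (1 - t*x) ^ p := Real.rpow_pos_of_pos (one_sub_mul_pos hx ht) _
    positivity
  have hnn : 0 ≤ᵐ[volume.restrict (Ioo (0:ℝ) 1)]
      fun t : ℝ => t ^ (b-1) * (1-t) ^ (c-b-1) * t ^ k * (1 - t*x) ^ p := by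
    filter_upwards [ae_restrict_mem measurableSet_Ioo] with t ht
    exact (hpos t ht).le
  rw [setIntegral_pos_iff_support_of_nonneg_ae hnn hi]
  · have hsub : Ioo (0:ℝ) 1 ⊆ Function.support
        (fun t : ℝ => t ^ (b-1) * (1-t) ^ (c-b-1) * t ^ k * (1 - t*x) ^ p) ∩ Ioo 0 1 :=
      fun t ht => ⟨ne_of_gt (hpos t ht), ht⟩
    calc (0:ℝ≥0∞) < volume (Ioo (0:ℝ) 1) := by simp
      _ ≤ _ := measure_mono hsub


lemma hasDerivAt_J {b c : ℝ} (hb : 0 < b) (hcb : b < c) (k : ℕ) (p : ℝ) {x₀ : ℝ}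
    (hx : x₀ < 1) :
    HasDerivAt (J b c k p) (-p * J b c (k+1) (p-1) x₀) x₀ := by
  set ε := (1 - x₀) / 2 with hε
  have hε0 : 0 < ε := by rw [hε]; linarith
  have hball : Metric.ball x₀ ε ⊆ Iio 1 := by
    intro y hy
    rw [Metric.mem_ball, Real.dist_eq] at hy
    have := abs_lt.mp hy
    simp only [mem_Iio]
    linarith [this.2]
  set m := min 1 (1 - (x₀ + ε)) with hm
  set M := 1 + (|x₀| + ε) with hM
  have hm0 : 0 < m := lt_min one_pos (by rw [hε]; linarith)
  set F' : ℝ → ℝ → ℝ := fun x t =>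
    t ^ (b - 1) * (1 - t) ^ (c - b - 1) * t ^ k * (p * (1 - t * x) ^ (p - 1) * -t) with hF'
  set bnd : ℝ → ℝ := fun t =>
    (|p| * (m ^ (p-1) + M ^ (p-1))) * (t ^ (b - 1) * (1 - t) ^ (c - b - 1)) with hbnd
  -- uniform bounds on the ball
  have hbd : ∀ x ∈ Metric.ball x₀ ε, ∀ t ∈ Ioo (0:ℝ) 1,
      m ≤ 1 - t * x ∧ 1 - t * x ≤ M := by
    intro x hxball t ht
    have hx1 : x < 1 := hball hxball
    have hd := abs_lt.mp (by rw [← Real.dist_eq]; exact Metric.mem_ball.mp hxball)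
    constructor
    · refine le_trans ?_ (kernel_lb hx1 ht)
      apply min_le_min le_rfl
      linarith [hd.2]
    · refine le_trans (kernel_ub ht) ?_
      rw [hM]
      have h2 : |x| ≤ |x₀| + ε := by
        have h3 := abs_sub_abs_le_abs_sub x x₀
        have h4 : |x - x₀| < ε := by
          rw [← Real.dist_eq]; exact Metric.mem_ball.mp hxball
        linarith
      linarith
  have key := hasDerivAt_integral_of_dominated_loc_of_deriv_le (μ := volume.restrict (Ioo (0:ℝ) 1))
    (F := fun x t => t ^ (b - 1) * (1 - t) ^ (c - b - 1) * t ^ k * (1 - t * x) ^ p)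
    (F' := F') (x₀ := x₀) (bound := bnd) (Metric.ball_mem_nhds x₀ hε0) ?_ ?_ ?_ ?_ ?_ ?_
  · have : ∫ t in Ioo (0:ℝ) 1, F' x₀ t = -p * J b c (k+1) (p-1) x₀ := by
      rw [J, ← integral_const_mul]
      apply setIntegral_congr_fun measurableSet_Ioo
      intro t ht
      simp only [hF']
      ring
    rw [J] at this ⊢
    rw [← this]; exact key.2
  · -- measurability of F x for x near x₀
    filter_upwards [isOpen_Iio.mem_nhds hx] with x hx1
    exact (contOn_integrand hx1 k p).aestronglyMeasurable measurableSet_Ioo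
  · exact integrable_J hb hcb hx k p
  · -- measurability of F' x₀
    apply AEStronglyMeasurable.congr
      (((contOn_integrand hx (k+1) (p-1)).aestronglyMeasurable measurableSet_Ioo).const_mul (-p))
    filter_upwards [ae_restrict_mem measurableSet_Ioo] with t ht
    simp only [hF']
    ring
  · -- bound
    filter_upwards [ae_restrict_mem measurableSet_Ioo] with t ht
    intro x hxb
    have hbds := hbd x hxb t ht
    have hu0 : 0 < 1 - t * x := lt_of_lt_of_le hm0 hbds.1
    have hwpos : (0:ℝ) ≤ t ^ (b-1) * (1-t) ^ (c-b-1) := by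
      have h1 : (0:ℝ) ≤ t ^ (b-1) := Real.rpow_nonneg ht.1.le _
      have h2 : (0:ℝ) ≤ (1-t) ^ (c-b-1) := Real.rpow_nonneg (by linarith [ht.2]) _
      positivity
    have habs : ‖F' x t‖ = t ^ (b-1) * (1-t) ^ (c-b-1) * t ^ k * (|p| * (1 - t*x) ^ (p-1) * t) := by
      simp only [hF', Real.norm_eq_abs]
      rw [abs_mul, abs_mul, abs_mul, abs_mul, abs_mul]
      rw [abs_of_nonneg (Real.rpow_nonneg ht.1.le _),
        abs_of_nonneg (Real.rpow_nonneg (by linarith [ht.2] : (0:ℝ) ≤ 1 - t) _),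
        abs_of_nonneg (pow_nonneg ht.1.le k),
        abs_of_nonneg (Real.rpow_nonneg hu0.le _), abs_neg, abs_of_pos ht.1]
    rw [habs, hbnd]
    have hker : (1 - t*x) ^ (p-1) ≤ m ^ (p-1) + M ^ (p-1) :=
      rpow_le_add hm0 hbds.1 hbds.2
    have htk : t ^ k ≤ 1 := pow_le_one₀ ht.1.le ht.2.le
    have hkpos : (0:ℝ) ≤ (1 - t*x) ^ (p-1) := Real.rpow_nonneg hu0.le _
    have hMa : (0:ℝ) ≤ m ^ (p-1) + M ^ (p-1) := by
      have := Real.rpow_nonneg hm0.le (p-1)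
      have : (0:ℝ) ≤ M ^ (p-1) := Real.rpow_nonneg (le_trans hm0.le (hbds.1.trans hbds.2)) _
      linarith [Real.rpow_nonneg hm0.le (p-1)]
    calc t ^ (b-1) * (1-t) ^ (c-b-1) * t ^ k * (|p| * (1 - t*x) ^ (p-1) * t)
        ≤ t ^ (b-1) * (1-t) ^ (c-b-1) * 1 * (|p| * (m ^ (p-1) + M ^ (p-1)) * 1) := by
          apply mul_le_mul
          · exact mul_le_mul_of_nonneg_left htk hwpos
          · apply mul_le_mul
            · exact mul_le_mul_of_nonneg_left hker (abs_nonneg p)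
            · exact ht.2.le
            · exact ht.1.le
            · exact mul_nonneg (abs_nonneg p) hMa
          · exact mul_nonneg (mul_nonneg (abs_nonneg p) hkpos) ht.1.le
          · nlinarith
      _ = |p| * (m ^ (p-1) + M ^ (p-1)) * (t ^ (b-1) * (1-t) ^ (c-b-1)) := by ring
  · exact ((integrableOn_w hb hcb).const_mul _)
  · -- differentiability
    filter_upwards [ae_restrict_mem measurableSet_Ioo] with t ht
    intro x hxb
    have hu0 : 0 < 1 - t * x := lt_of_lt_of_le hm0 (hbd x hxb t ht).1
    have hinner : HasDerivAt (fun y : ℝ => 1 - t * y) (-t) x := by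
      simpa using ((hasDerivAt_id x).const_mul t).const_sub 1
    have h2 := (hinner.rpow_const (p := p) (Or.inl hu0.ne')).const_mul
      (t ^ (b - 1) * (1 - t) ^ (c - b - 1) * t ^ k)
    refine h2.congr_deriv ?_
    simp only [hF']
    ring


lemma integral_mul_le_symm {X : Type*} [MeasurableSpace X] {μ : Measure X} [SigmaFinite μ]
    {f g F G : X → ℝ} (hf : Integrable f μ) (hg : Integrable g μ) (hF : Integrable F μ)
    (hG : Integrable G μ)
    (h : ∀ᵐ z ∂(μ.prod μ), F z.1 * G z.2 + F z.2 * G z.1 ≤ f z.1 * g z.2 + f z.2 * g z.1) :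
    (∫ x, F x ∂μ) * ∫ x, G x ∂μ ≤ (∫ x, f x ∂μ) * ∫ x, g x ∂μ := by
  have hFG : Integrable (fun z : X × X => F z.1 * G z.2) (μ.prod μ) := hF.mul_prod hG
  have hGF : Integrable (fun z : X × X => F z.2 * G z.1) (μ.prod μ) := by
    have := hG.mul_prod hF
    exact this.congr (Eventually.of_forall fun z => mul_comm _ _)
  have hfg : Integrable (fun z : X × X => f z.1 * g z.2) (μ.prod μ) := hf.mul_prod hg
  have hgf : Integrable (fun z : X × X => f z.2 * g z.1) (μ.prod μ) := by
    have := hg.mul_prod hf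
    exact this.congr (Eventually.of_forall fun z => mul_comm _ _)
  have e1 : ∫ z : X × X, F z.1 * G z.2 ∂(μ.prod μ) = (∫ x, F x ∂μ) * ∫ x, G x ∂μ :=
    integral_prod_mul F G
  have e2 : ∫ z : X × X, F z.2 * G z.1 ∂(μ.prod μ) = (∫ x, F x ∂μ) * ∫ x, G x ∂μ := by
    rw [← integral_prod_swap]
    simp only [Prod.fst_swap, Prod.snd_swap]
    exact e1
  have e3 : ∫ z : X × X, f z.1 * g z.2 ∂(μ.prod μ) = (∫ x, f x ∂μ) * ∫ x, g x ∂μ :=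
    integral_prod_mul f g
  have e4 : ∫ z : X × X, f z.2 * g z.1 ∂(μ.prod μ) = (∫ x, f x ∂μ) * ∫ x, g x ∂μ := by
    rw [← integral_prod_swap]
    simp only [Prod.fst_swap, Prod.snd_swap]
    exact e3
  have key : ∫ z : X × X, (F z.1 * G z.2 + F z.2 * G z.1) ∂(μ.prod μ)
      ≤ ∫ z : X × X, (f z.1 * g z.2 + f z.2 * g z.1) ∂(μ.prod μ) :=
    integral_mono_ae (hFG.add hGF) (hfg.add hgf) h
  rw [integral_add hFG hGF, integral_add hfg hgf, e1, e2, e3, e4] at key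
  linarith


lemma ae_prod_Ioo {P : ℝ × ℝ → Prop}
    (h : ∀ z : ℝ × ℝ, z.1 ∈ Ioo (0:ℝ) 1 → z.2 ∈ Ioo (0:ℝ) 1 → P z) :
    ∀ᵐ z ∂((volume.restrict (Ioo (0:ℝ) 1)).prod (volume.restrict (Ioo (0:ℝ) 1))), P z := by
  rw [Measure.prod_restrict]
  filter_upwards [ae_restrict_mem (measurableSet_Ioo.prod measurableSet_Ioo)] with z hz
  exact h z hz.1 hz.2

lemma cheb1 {b c α x : ℝ} (hb : 0 < b) (hcb : b < c) (hx : x < 1) :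
    J b c 1 (α-1) x * J b c 1 α x ≤ J b c 2 (α-1) x * J b c 0 α x := by
  rw [J, J, J, J]
  apply integral_mul_le_symm (integrable_J hb hcb hx 2 (α-1)) (integrable_J hb hcb hx 0 α)
    (integrable_J hb hcb hx 1 (α-1)) (integrable_J hb hcb hx 1 α)
  apply ae_prod_Ioo
  rintro ⟨s, t⟩ hs ht
  simp only
  have hu : 0 < 1 - s * x := one_sub_mul_pos hx hs
  have hv : 0 < 1 - t * x := one_sub_mul_pos hx ht
  have hus : (1 - s*x) ^ α = (1 - s*x) ^ (α-1) * (1 - s*x) := by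
    rw [← Real.rpow_add_one hu.ne' (α-1), sub_add_cancel]
  have hvs : (1 - t*x) ^ α = (1 - t*x) ^ (α-1) * (1 - t*x) := by
    rw [← Real.rpow_add_one hv.ne' (α-1), sub_add_cancel]
  rw [hus, hvs]
  have h0 : (0:ℝ) ≤ (s ^ (b-1) * (1-s) ^ (c-b-1)) * (t ^ (b-1) * (1-t) ^ (c-b-1)) *
      ((1 - s*x) ^ (α-1) * (1 - t*x) ^ (α-1)) * (s - t)^2 := by
    have h1 : (0:ℝ) ≤ s ^ (b-1) := Real.rpow_nonneg hs.1.le _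
    have h2 : (0:ℝ) ≤ (1-s) ^ (c-b-1) := Real.rpow_nonneg (by linarith [hs.2]) _
    have h3 : (0:ℝ) ≤ t ^ (b-1) := Real.rpow_nonneg ht.1.le _
    have h4 : (0:ℝ) ≤ (1-t) ^ (c-b-1) := Real.rpow_nonneg (by linarith [ht.2]) _
    have h5 : (0:ℝ) ≤ (1 - s*x) ^ (α-1) := Real.rpow_nonneg hu.le _
    have h6 : (0:ℝ) ≤ (1 - t*x) ^ (α-1) := Real.rpow_nonneg hv.le _
    positivity
  nlinarith [h0]

lemma cheb2 {b c α x : ℝ} (hb : 0 < b) (hcb : b < c) (hx : x < 1) :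
    J b c 2 (α-2) x * J b c 1 α x ≤ J b c 3 (α-2) x * J b c 0 α x := by
  rw [J, J, J, J]
  apply integral_mul_le_symm (integrable_J hb hcb hx 3 (α-2)) (integrable_J hb hcb hx 0 α)
    (integrable_J hb hcb hx 2 (α-2)) (integrable_J hb hcb hx 1 α)
  apply ae_prod_Ioo
  rintro ⟨s, t⟩ hs ht
  simp only
  have hu : 0 < 1 - s * x := one_sub_mul_pos hx hs
  have hv : 0 < 1 - t * x := one_sub_mul_pos hx ht
  have hus : (1 - s*x) ^ α = (1 - s*x) ^ (α-2) * ((1 - s*x) * (1 - s*x)) := by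
    rw [show α = (α-2)+1+1 by ring, Real.rpow_add_one hu.ne', Real.rpow_add_one hu.ne']
    ring_nf
  have hvs : (1 - t*x) ^ α = (1 - t*x) ^ (α-2) * ((1 - t*x) * (1 - t*x)) := by
    rw [show α = (α-2)+1+1 by ring, Real.rpow_add_one hv.ne', Real.rpow_add_one hv.ne']
    ring_nf
  rw [hus, hvs]
  have h0 : (0:ℝ) ≤ (s ^ (b-1) * (1-s) ^ (c-b-1)) * (t ^ (b-1) * (1-t) ^ (c-b-1)) *
      ((1 - s*x) ^ (α-2) * (1 - t*x) ^ (α-2)) *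
      ((s - t)^2 * (s * (1 - t*x) + t * (1 - s*x))) := by
    have h1 : (0:ℝ) ≤ s ^ (b-1) := Real.rpow_nonneg hs.1.le _
    have h2 : (0:ℝ) ≤ (1-s) ^ (c-b-1) := Real.rpow_nonneg (by linarith [hs.2]) _
    have h3 : (0:ℝ) ≤ t ^ (b-1) := Real.rpow_nonneg ht.1.le _
    have h4 : (0:ℝ) ≤ (1-t) ^ (c-b-1) := Real.rpow_nonneg (by linarith [ht.2]) _
    have h5 : (0:ℝ) ≤ (1 - s*x) ^ (α-2) := Real.rpow_nonneg hu.le _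
    have h6 : (0:ℝ) ≤ (1 - t*x) ^ (α-2) := Real.rpow_nonneg hv.le _
    have h7 : (0:ℝ) ≤ s * (1 - t*x) + t * (1 - s*x) := by
      have := mul_nonneg hs.1.le hv.le
      have := mul_nonneg ht.1.le hu.le
      linarith
    positivity
  nlinarith [h0]


lemma final_nonneg {α A B C D E2 E3 : ℝ} (hα0 : 0 < α) (hα1 : α < 1)
    (hA : 0 < A) (hB : 0 < B) (hC : 0 ≤ C) (hD : 0 ≤ D)
    (h1 : C * B ≤ D * A) (h2 : E2 * B ≤ E3 * A) :
    0 ≤ (-α * (-(α - 1) * E2) * A - -α * C * (-α * C)) / A ^ 2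
      - (-α * (-(α - 1) * E3) * B - -α * D * (-α * D)) / B ^ 2 := by
  have key : (-α * (-(α - 1) * E2) * A - -α * C * (-α * C)) / A ^ 2
      - (-α * (-(α - 1) * E3) * B - -α * D * (-α * D)) / B ^ 2
      = α * (1 - α) * (E3 / B - E2 / A) + α ^ 2 * ((D / B) ^ 2 - (C / A) ^ 2) := by
    field_simp
    ring
  rw [key]
  have hE : E2 / A ≤ E3 / B := by rw [div_le_div_iff₀ hA hB]; exact h2
  have hCD : C / A ≤ D / B := by rw [div_le_div_iff₀ hA hB]; exact h1
  have hCA : 0 ≤ C / A := by positivity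
  have hsq : (C / A) ^ 2 ≤ (D / B) ^ 2 := by nlinarith
  have t1 : 0 ≤ α * (1 - α) * (E3 / B - E2 / A) := by
    apply mul_nonneg (by nlinarith) (by linarith)
  have t2 : 0 ≤ α ^ 2 * ((D / B) ^ 2 - (C / A) ^ 2) := by
    apply mul_nonneg (by positivity) (by linarith)
  linarith

lemma convexOn_congr {s : Set ℝ} {f g : ℝ → ℝ} (hs : Convex ℝ s) (hf : ConvexOn ℝ s f)
    (h : ∀ x ∈ s, g x = f x) : ConvexOn ℝ s g := by
  refine ⟨hs, fun x hx y hy p q hp hq hpq => ?_⟩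
  rw [h x hx, h y hy, h _ (hs hx hy hp hq hpq)]
  exact hf.2 hx hy hp hq hpq

lemma Fhyp_eq0 {a b c : ℝ} (x : ℝ) :
    Fhyp a b c x = (Real.Gamma c / (Real.Gamma b * Real.Gamma (c - b))) * J b c 0 (-a) x := by
  rw [Fhyp, J]
  congr 1
  rw [intervalIntegral.integral_of_le zero_le_one, integral_Ioc_eq_integral_Ioo]
  apply setIntegral_congr_fun measurableSet_Ioo
  intro t ht
  ring

lemma Fhyp_eq1 {a b c : ℝ} (x : ℝ) :
    Fhyp a (b+1) (c+1) x
      = (Real.Gamma (c+1) / (Real.Gamma (b+1) * Real.Gamma (c - b))) * J b c 1 (-a) x := by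
  rw [Fhyp, J]
  have hgamma : c + 1 - (b + 1) = c - b := by ring
  rw [hgamma]
  congr 1
  rw [intervalIntegral.integral_of_le zero_le_one, integral_Ioc_eq_integral_Ioo]
  apply setIntegral_congr_fun measurableSet_Ioo
  intro t ht
  simp only []
  rw [show b + 1 - 1 = (b - 1) + 1 by ring, Real.rpow_add_one (ne_of_gt ht.1)]
  ring

/-- Logarithmic convexity of the Gaussian ratio `F(a,b,c,x)/F(a,b+1,c+1,x)` on
`(-∞,1)` for `-1 < a < 0` and `c > b > 0`. -/
theorem stmt_18 (a b c : ℝ) (ha₁ : -1 < a) (ha₂ : a < 0) (hb : 0 < b) (hcb : b < c) :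
    (∀ x < (1:ℝ), 0 < Fhyp a b c x / Fhyp a (b + 1) (c + 1) x) ∧
    ConvexOn ℝ (Set.Iio 1)
      (fun x => Real.log (Fhyp a b c x / Fhyp a (b + 1) (c + 1) x)) := by
  have hα0 : (0:ℝ) < -a := by linarith
  have hα1 : -a < 1 := by linarith
  have hc : 0 < c := lt_trans hb hcb
  have hcbp : 0 < c - b := by linarith
  have hk0 : 0 < Real.Gamma c / (Real.Gamma b * Real.Gamma (c - b)) := by
    have := Real.Gamma_pos_of_pos hc
    have := Real.Gamma_pos_of_pos hb
    have := Real.Gamma_pos_of_pos hcbp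
    positivity
  have hk1 : 0 < Real.Gamma (c+1) / (Real.Gamma (b+1) * Real.Gamma (c - b)) := by
    have := Real.Gamma_pos_of_pos (by linarith : (0:ℝ) < c + 1)
    have := Real.Gamma_pos_of_pos (by linarith : (0:ℝ) < b + 1)
    have := Real.Gamma_pos_of_pos hcbp
    positivity
  constructor
  · intro x hx
    rw [Fhyp_eq0, Fhyp_eq1]
    have hA := J_pos hb hcb hx 0 (-a)
    have hB := J_pos hb hcb hx 1 (-a)
    positivity
  · -- convexity
    have hconv : ConvexOn ℝ (Iio (1:ℝ))
        (fun x => Real.log (J b c 0 (-a) x) - Real.log (J b c 1 (-a) x)) := by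
      apply convexOn_of_hasDerivWithinAt2_nonneg (convex_Iio 1)
        (f' := fun x => -(-a) * J b c 1 (-a-1) x / J b c 0 (-a) x
          - -(-a) * J b c 2 (-a-1) x / J b c 1 (-a) x)
        (f'' := fun x =>
          (-(-a) * (-(-a - 1) * J b c 2 (-a-2) x) * J b c 0 (-a) x
            - -(-a) * J b c 1 (-a-1) x * (-(-a) * J b c 1 (-a-1) x)) / J b c 0 (-a) x ^ 2
          - (-(-a) * (-(-a - 1) * J b c 3 (-a-2) x) * J b c 1 (-a) x
            - -(-a) * J b c 2 (-a-1) x * (-(-a) * J b c 2 (-a-1) x)) / J b c 1 (-a) x ^ 2)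
      · -- ContinuousOn
        intro x hx
        have hA := J_pos hb hcb hx 0 (-a)
        have hB := J_pos hb hcb hx 1 (-a)
        exact (((hasDerivAt_J hb hcb 0 (-a) hx).log hA.ne').sub
          ((hasDerivAt_J hb hcb 1 (-a) hx).log hB.ne')).continuousAt.continuousWithinAt
      · -- first derivative
        rw [interior_Iio]
        intro x hx
        have hA := J_pos hb hcb hx 0 (-a)
        have hB := J_pos hb hcb hx 1 (-a)
        exact (((hasDerivAt_J hb hcb 0 (-a) hx).log hA.ne').sub
          ((hasDerivAt_J hb hcb 1 (-a) hx).log hB.ne')).hasDerivWithinAt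
      · -- second derivative
        rw [interior_Iio]
        intro x hx
        have hA := J_pos hb hcb hx 0 (-a)
        have hB := J_pos hb hcb hx 1 (-a)
        have e : -a - 1 - 1 = -a - 2 := by ring
        have dA := hasDerivAt_J hb hcb 0 (-a) hx
        have dB := hasDerivAt_J hb hcb 1 (-a) hx
        have dC := hasDerivAt_J hb hcb 1 (-a-1) hx
        have dD := hasDerivAt_J hb hcb 2 (-a-1) hx
        rw [e] at dC dD
        exact (((dC.const_mul (-(-a))).div dA hA.ne').sub
          ((dD.const_mul (-(-a))).div dB hB.ne')).hasDerivWithinAt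
      · -- nonnegativity
        rw [interior_Iio]
        intro x hx
        exact final_nonneg hα0 hα1 (J_pos hb hcb hx 0 (-a)) (J_pos hb hcb hx 1 (-a))
          (J_pos hb hcb hx 1 (-a-1)).le (J_pos hb hcb hx 2 (-a-1)).le
          (by have := cheb1 (α := -a) hb hcb hx; simpa [show -a - 1 = -a - 1 from rfl] using this)
          (by have := cheb2 (α := -a) hb hcb hx; simpa using this)
    set K : ℝ := Real.log (Real.Gamma c / (Real.Gamma b * Real.Gamma (c - b)))
      - Real.log (Real.Gamma (c+1) / (Real.Gamma (b+1) * Real.Gamma (c - b))) with hK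
    have hconst : ConvexOn ℝ (Iio (1:ℝ)) (fun _ : ℝ => K) := convexOn_const K (convex_Iio 1)
    have hsum : ConvexOn ℝ (Iio (1:ℝ))
        (fun x => (Real.log (J b c 0 (-a) x) - Real.log (J b c 1 (-a) x)) + K) :=
      hconv.add hconst
    apply convexOn_congr (convex_Iio 1) hsum
    intro x hx
    rw [Fhyp_eq0, Fhyp_eq1]
    have hA := J_pos hb hcb hx 0 (-a)
    have hB := J_pos hb hcb hx 1 (-a)
    rw [Real.log_div (by positivity) (by positivity), Real.log_mul hk0.ne' hA.ne',
      Real.log_mul hk1.ne' hB.ne', hK]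
    ring
end
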